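/- arXiv:1507.01072 — 3 statements merged into one kernel-verified Lean document; each statement's English description precedes it below -/
import Mathlib

section
/- Let M be a unital C*-algebra with a faithful tracial state τ, let n ≥ 2, and let (u₁, …, uₙ) be an L-free family of unitaries in M. Then ‖u₁ + u₂ + ⋯ + uₙ‖ = 2√(n−1). -/
open scoped BigOperators ComplexOrder

section Defs

variable {A : Type*} [Ring A] [StarRing A] [Algebra ℂ A]

/-- `τ` is a (ℂ-linear) tracial state on the unital star ℂ-algebra `A`. -/
def IsTracialState (τ : A → ℂ) : Prop :=
  (∀ (c : ℂ) (x y : A), τ (c • x + y) = c * τ x + τ y) ∧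
  τ 1 = 1 ∧ (∀ x : A, 0 ≤ τ (star x * x)) ∧ (∀ x y : A, τ (x * y) = τ (y * x))

/-- `τ` is faithful. -/
def IsFaithful (τ : A → ℂ) : Prop := ∀ x : A, τ (star x * x) = 0 → x = 0

def IsProjection (p : A) : Prop := star p = p ∧ p * p = p

def IsUnitary (u : A) : Prop := star u * u = 1 ∧ u * star u = 1

/-- The alternating word `x_{i 0} (x_{i 1})* x_{i 2} (x_{i 3})* ⋯`. -/
def LWord {n m : ℕ} (x : Fin n → A) (i : Fin m → Fin n) : A :=
  (List.ofFn fun s : Fin m => if (s : ℕ) % 2 = 0 then x (i s) else star (x (i s))).prod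

/-- The alternating word `(x_{i 0})* x_{i 1} (x_{i 2})* x_{i 3} ⋯`. -/
def LWordStar {n m : ℕ} (x : Fin n → A) (i : Fin m → Fin n) : A :=
  (List.ofFn fun s : Fin m => if (s : ℕ) % 2 = 0 then star (x (i s)) else x (i s)).prod

/-- L-freeness of a finite family with respect to `τ`. -/
def IsLFree {n : ℕ} (τ : A → ℂ) (x : Fin n → A) : Prop :=
  ∀ (k : ℕ), 1 ≤ k → ∀ i : Fin (2 * k) → Fin n,
    (∀ s t : Fin (2 * k), (t : ℕ) = (s : ℕ) + 1 → i s ≠ i t) →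
    τ (LWord x i) = 0 ∧ τ (LWordStar x i) = 0

/-- Integer powers of a unitary: negative powers are powers of the adjoint. -/
def zpowU (u : A) (k : ℤ) : A := if 0 ≤ k then u ^ k.toNat else star u ^ (-k).toNat

/-- `v₁, …, v_m` are freely independent Haar unitaries with respect to `τ`. -/
def AreHaarFree {m : ℕ} (τ : A → ℂ) (v : Fin m → A) : Prop :=
  ∀ (r : ℕ), 1 ≤ r → ∀ (i : Fin r → Fin m) (e : Fin r → ℤ),
    (∀ s, e s ≠ 0) → (∀ s t : Fin r, (t : ℕ) = (s : ℕ) + 1 → i s ≠ i t) →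
    τ ((List.ofFn fun s : Fin r => zpowU (v (i s)) (e s)).prod) = 0

/-- `X` and `Y` are freely independent sets with respect to `τ`: every alternating
word with letters from `X` and `Y` has zero trace. -/
def FreeSets (τ : A → ℂ) (X Y : Set A) : Prop :=
  ∀ (m : ℕ), 1 ≤ m → ∀ z : Fin m → A,
    ((∀ s : Fin m, if (s : ℕ) % 2 = 0 then z s ∈ X else z s ∈ Y) ∨
     (∀ s : Fin m, if (s : ℕ) % 2 = 0 then z s ∈ Y else z s ∈ X)) →
    τ ((List.ofFn z).prod) = 0

end Defs

namespace LFreeAux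

abbrev Ltr (n : ℕ) := Fin n × Bool

variable {n : ℕ}

def linv (ℓ : Ltr n) : Ltr n := (ℓ.1, !ℓ.2)

@[simp] lemma linv_linv (ℓ : Ltr n) : linv (linv ℓ) = ℓ := by
  simp [linv]

def push (S : List (Ltr n)) (ℓ : Ltr n) : List (Ltr n) :=
  match S with
  | [] => [ℓ]
  | h :: t => if h = linv ℓ then t else ℓ :: h :: t

/-- reducedness of a stack/word -/
def Rd (S : List (Ltr n)) : Prop := List.Chain' (fun a b => b ≠ linv a) S

lemma rd_nil : Rd ([] : List (Ltr n)) := List.isChain_nil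

lemma push_rd {S : List (Ltr n)} (hS : Rd S) (ℓ : Ltr n) : Rd (push S ℓ) := by
  cases S with
  | nil => simp [push, Rd, List.Chain']
  | cons h t =>
    by_cases hc : h = linv ℓ
    · simpa [push, hc, Rd, List.Chain'] using hS.tail
    · simp only [push, if_neg hc]
      exact List.IsChain.cons_cons hc hS

lemma push_push {S : List (Ltr n)} (hS : Rd S) (ℓ : Ltr n) :
    push (push S ℓ) (linv ℓ) = S := by
  cases S with
  | nil => simp [push]
  | cons h t =>
    by_cases hc : h = linv ℓ
    · subst hc
      have h1 : push (linv ℓ :: t) ℓ = t := by simp [push]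
      rw [show push (push (linv ℓ :: t) ℓ) (linv ℓ) = push t (linv ℓ) from by rw [h1]]
      cases t with
      | nil => rfl
      | cons h' t' =>
        have hne : h' ≠ linv (linv ℓ) := (List.isChain_cons_cons.mp hS).1
        rw [linv_linv] at hne
        simp [push, hne]
    · simp [push, if_neg hc]

lemma foldl_push_rd {S : List (Ltr n)} (hS : Rd S) (w : List (Ltr n)) :
    Rd (List.foldl push S w) := by
  induction w generalizing S with
  | nil => exact hS
  | cons ℓ w ih => exact ih (push_rd hS ℓ)

lemma red_del (x : List (Ltr n)) (ℓ : Ltr n) (y : List (Ltr n)) :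
    List.foldl push [] (x ++ ℓ :: linv ℓ :: y) = List.foldl push [] (x ++ y) := by
  rw [List.foldl_append, List.foldl_append]
  have h1 : List.foldl push (List.foldl push [] x) (ℓ :: linv ℓ :: y)
      = List.foldl push (push (push (List.foldl push [] x) ℓ) (linv ℓ)) y := rfl
  rw [h1, push_push (foldl_push_rd rd_nil x) ℓ]

lemma red_reduced (w : List (Ltr n)) (hw : List.Chain' (fun a b => b ≠ linv a) w) :
    List.foldl push [] w = w.reverse := by
  induction w using List.reverseRecOn with
  | nil => rfl
  | append_singleton w ℓ ih =>
    rcases List.isChain_append.mp hw with ⟨hw1, -, hlast⟩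
    rw [List.foldl_append, ih hw1]
    cases hrev : w.reverse with
    | nil =>
      have hw0 : w = [] := by simpa using hrev
      subst hw0
      simp [push]
    | cons x t =>
      have hx : ℓ ≠ linv x := by
        apply hlast x _ ℓ (by simp)
        rw [← List.head?_reverse, hrev]; rfl
      have : ¬ (x = linv ℓ) := fun he => hx (by rw [he, linv_linv])
      simp [push, this, hrev]

/-- processing a pair `(a,b)` (meaning the word `u_a u_b*`) -/
def PS (S : List (Ltr n)) (p : Fin n × Fin n) : List (Ltr n) :=
  push (push S (p.1, true)) (p.2, false)

def redP (S : List (Ltr n)) (q : List (Fin n × Fin n)) : List (Ltr n) := q.foldl PS S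

def letters : List (Fin n × Fin n) → List (Ltr n)
  | [] => []
  | p :: q => (p.1, true) :: (p.2, false) :: letters q

@[simp] lemma letters_nil : letters ([] : List (Fin n × Fin n)) = [] := rfl
@[simp] lemma letters_cons (p : Fin n × Fin n) (q : List (Fin n × Fin n)) :
    letters (p :: q) = (p.1, true) :: (p.2, false) :: letters q := rfl

lemma letters_append (q₁ q₂ : List (Fin n × Fin n)) :
    letters (q₁ ++ q₂) = letters q₁ ++ letters q₂ := by
  induction q₁ with
  | nil => rfl
  | cons p q ih => simp [ih]

@[simp] lemma letters_length (q : List (Fin n × Fin n)) :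
    (letters q).length = 2 * q.length := by
  induction q with
  | nil => rfl
  | cons p q ih => simp [ih]; ring

lemma redP_eq_foldl (q : List (Fin n × Fin n)) (S : List (Ltr n)) :
    redP S q = List.foldl push S (letters q) := by
  induction q generalizing S with
  | nil => rfl
  | cons p q ih => simp only [redP, List.foldl_cons, letters_cons] at *; exact ih _

/-! ### Counting -/

def fcnt (n : ℕ) : ℕ → ℕ → ℕ
  | 0, 0 => 1
  | 0, _ + 1 => 0
  | m + 1, 0 => n * fcnt n m 0 + n * (n - 1) * fcnt n m 1
  | m + 1, h + 1 => fcnt n m h + 2 * (n - 1) * fcnt n m (h + 1) + (n - 1) ^ 2 * fcnt n m (h + 2)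

def Tcnt (n : ℕ) (m : ℕ) (S : List (Ltr n)) : ℕ :=
  Fintype.card {v : Fin m → Fin n × Fin n // redP S (List.ofFn v) = []}

lemma Tcnt_zero (S : List (Ltr n)) : Tcnt n 0 S = if S = [] then 1 else 0 := by
  by_cases hS : S = []
  · subst hS
    rw [if_pos rfl, Tcnt]
    have : ∀ v : Fin 0 → Fin n × Fin n, redP ([] : List (Ltr n)) (List.ofFn v) = [] := by
      intro v; simp [redP]
    rw [Fintype.card_eq_one_iff]
    exact ⟨⟨fun i => i.elim0, this _⟩, fun y => Subtype.ext (funext fun i => i.elim0)⟩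
  · rw [if_neg hS, Tcnt, Fintype.card_eq_zero_iff]
    refine ⟨fun v => hS ?_⟩
    have := v.2
    simpa [redP] using this

lemma Tcnt_succ (m : ℕ) (S : List (Ltr n)) :
    Tcnt n (m + 1) S = ∑ p : Fin n × Fin n, Tcnt n m (PS S p) := by
  classical
  have e : {v : Fin (m + 1) → Fin n × Fin n // redP S (List.ofFn v) = []} ≃
      Σ p : Fin n × Fin n, {w : Fin m → Fin n × Fin n // redP (PS S p) (List.ofFn w) = []} :=
    { toFun := fun v => ⟨v.1 0, ⟨fun i => v.1 i.succ, by
        have := v.2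
        rwa [List.ofFn_succ, redP, List.foldl_cons] at this⟩⟩
      invFun := fun pw => ⟨Fin.cons pw.1 pw.2.1, by
        rw [List.ofFn_succ, redP, List.foldl_cons]
        simpa [Fin.cons, redP] using pw.2.2⟩
      left_inv := fun v => by
        apply Subtype.ext
        exact funext fun i => Fin.cases rfl (fun j => rfl) i
      right_inv := fun pw => by
        refine Sigma.ext rfl ?_
        simp only [heq_eq_eq]
        apply heq_of_eq
        apply Subtype.ext
        rfl }
  rw [Tcnt, Fintype.card_congr e, Fintype.card_sigma]
  rfl

/-- "good" stacks: the stacks reachable by pair-processing -/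
inductive GS : List (Ltr n) → Prop
  | nil : GS []
  | cons (c d : Fin n) (S : List (Ltr n)) : GS S → c ≠ d →
      (∀ p ∈ S.head?, (p : Ltr n).1 ≠ c) → GS ((d, false) :: (c, true) :: S)

lemma PS_nil (a b : Fin n) :
    PS ([] : List (Ltr n)) (a, b) = if a = b then [] else [(b, false), (a, true)] := by
  by_cases hab : a = b
  · subst hab; simp [PS, push, linv]
  · have h2 : ¬ ((a, true) : Ltr n) = linv (b, false) := by
      simp [linv]; intro h; exact hab h
    simp [PS, push, linv, hab, h2]

lemma PS_cons (c d : Fin n) (S : List (Ltr n)) (a b : Fin n) :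
    PS ((d, false) :: (c, true) :: S) (a, b) =
      if a = d then (if b = c then S else (b, false) :: (c, true) :: S)
      else (if b = a then (d, false) :: (c, true) :: S
            else (b, false) :: (a, true) :: (d, false) :: (c, true) :: S) := by
  by_cases had : a = d
  · subst had
    have h1 : push ((a, false) :: (c, true) :: S) ((a : Fin n), true) = (c, true) :: S := by
      simp [push, linv]
    by_cases hbc : b = c
    · subst hbc; simp [PS, h1, push, linv]
    · have h2 : ¬ ((c, true) : Ltr n) = linv (b, false) := by
        simp [linv]; intro h; exact hbc h.symm
      have hbc' : ¬ c = b := fun h => hbc h.symm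
      simp [PS, h1, push, linv, h2, hbc, hbc']
  · have had' : ¬ ((d, false) : Ltr n) = linv (a, true) := by
      simp [linv]; intro h; exact had h.symm
    have h1 : push ((d, false) :: (c, true) :: S) ((a : Fin n), true)
        = (a, true) :: (d, false) :: (c, true) :: S := by
      simp [push, had']
    have had'' : ¬ d = a := fun h => had h.symm
    by_cases hba : b = a
    · subst hba
      simp [PS, h1, push, linv, had, had'']
    · have h2 : ¬ ((a, true) : Ltr n) = linv (b, false) := by
        simp [linv]; intro h; exact hba h.symm
      have hba' : ¬ a = b := fun h => hba h.symm
      simp [PS, h1, push, linv, h2, had, hba, had'', hba']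

lemma sum_ite_eq_card (y : Fin n) (A B : ℕ) :
    (∑ x : Fin n, if x = y then A else B) = A + (n - 1) * B := by
  classical
  rw [← Finset.add_sum_erase Finset.univ _ (Finset.mem_univ y)]
  simp only [if_pos rfl]
  congr 1
  rw [Finset.sum_congr rfl (fun x hx => if_neg (Finset.ne_of_mem_erase hx)),
    Finset.sum_const, smul_eq_mul, Finset.card_erase_of_mem (Finset.mem_univ y),
    Finset.card_univ, Fintype.card_fin]

lemma sum_ite_eq_card' (y : Fin n) (A B : ℕ) :
    (∑ x : Fin n, if y = x then A else B) = A + (n - 1) * B := by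
  classical
  rw [← Finset.add_sum_erase Finset.univ _ (Finset.mem_univ y)]
  simp only [if_pos rfl]
  congr 1
  rw [Finset.sum_congr rfl
      (fun x hx => if_neg (fun hh => (Finset.ne_of_mem_erase hx) hh.symm)),
    Finset.sum_const, smul_eq_mul, Finset.card_erase_of_mem (Finset.mem_univ y),
    Finset.card_univ, Fintype.card_fin]

lemma length_cons_cons_div (x y : Ltr n) (S : List (Ltr n)) :
    ((x :: y :: S).length) / 2 = S.length / 2 + 1 := by
  simp only [List.length_cons]; omega

lemma Tcnt_eq_fcnt : ∀ (m : ℕ) (S : List (Ltr n)), GS S → Tcnt n m S = fcnt n m (S.length / 2)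
  | 0, S, hS => by
    rw [Tcnt_zero]
    cases hS with
    | nil => simp [fcnt]
    | cons c d S' hS' hcd hhd =>
      rw [if_neg (by simp), length_cons_cons_div]
      rfl
  | m + 1, S, hS => by
    rw [Tcnt_succ]
    cases hS with
    | nil =>
      have hval : ∀ a b : Fin n, Tcnt n m (PS [] (a, b))
          = if a = b then fcnt n m 0 else fcnt n m 1 := by
        intro a b
        rw [PS_nil]
        by_cases hab : a = b
        · simp only [if_pos hab]
          simpa using Tcnt_eq_fcnt m [] GS.nil
        · simp only [if_neg hab]
          have hgs : GS [(b, false), (a, true)] := GS.cons a b [] GS.nil hab (by simp)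
          simpa using Tcnt_eq_fcnt m [(b, false), (a, true)] hgs
      calc (∑ p : Fin n × Fin n, Tcnt n m (PS [] p))
          = ∑ a : Fin n, ∑ b : Fin n, Tcnt n m (PS [] (a, b)) := Fintype.sum_prod_type _
        _ = ∑ a : Fin n, (fcnt n m 0 + (n - 1) * fcnt n m 1) := by
            refine Finset.sum_congr rfl (fun a _ => ?_)
            rw [Finset.sum_congr rfl (fun b _ => hval a b)]
            exact sum_ite_eq_card' a (fcnt n m 0) (fcnt n m 1)
        _ = n * (fcnt n m 0 + (n - 1) * fcnt n m 1) := by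
            rw [Finset.sum_const, smul_eq_mul, Finset.card_univ, Fintype.card_fin]
        _ = n * fcnt n m 0 + n * (n - 1) * fcnt n m 1 := by ring
        _ = fcnt n (m + 1) 0 := rfl
        _ = fcnt n (m + 1) (([] : List (Ltr n)).length / 2) := by norm_num
    | cons c d S' hS' hcd hhd =>
      set h := S'.length / 2 with hh
      have hlen : ((d, false) :: (c, true) :: S').length / 2 = h + 1 :=
        length_cons_cons_div _ _ _
      have hS0 : GS ((d, false) :: (c, true) :: S') := GS.cons c d S' hS' hcd hhd
      have hval : ∀ a b : Fin n, Tcnt n m (PS ((d, false) :: (c, true) :: S') (a, b))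
          = if a = d then (if b = c then fcnt n m h else fcnt n m (h + 1))
            else (if b = a then fcnt n m (h + 1) else fcnt n m (h + 2)) := by
        intro a b
        rw [PS_cons]
        by_cases had : a = d
        · by_cases hbc : b = c
          · simp only [if_pos had, if_pos hbc]
            exact Tcnt_eq_fcnt m S' hS'
          · simp only [if_pos had, if_neg hbc]
            have hgs : GS ((b, false) :: (c, true) :: S') :=
              GS.cons c b S' hS' (fun hcb => hbc hcb.symm) hhd
            rw [Tcnt_eq_fcnt m _ hgs, length_cons_cons_div]
        · by_cases hba : b = a
          · simp only [if_neg had, if_pos hba]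
            rw [Tcnt_eq_fcnt m _ hS0, hlen]
          · simp only [if_neg had, if_neg hba]
            have hgs : GS ((b, false) :: (a, true) :: (d, false) :: (c, true) :: S') :=
              GS.cons a b _ hS0 (fun hab => hba hab.symm)
                (by intro p hp; simp only [List.head?_cons, Option.mem_def, Option.some.injEq] at hp
                    subst hp; simpa using fun hda => had hda.symm)
            rw [Tcnt_eq_fcnt m _ hgs, length_cons_cons_div, length_cons_cons_div]
      calc (∑ p : Fin n × Fin n, Tcnt n m (PS ((d, false) :: (c, true) :: S') p))
          = ∑ a : Fin n, ∑ b : Fin n, Tcnt n m (PS ((d, false) :: (c, true) :: S') (a, b)) :=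
            Fintype.sum_prod_type _
        _ = ∑ a : Fin n, (if a = d then (fcnt n m h + (n - 1) * fcnt n m (h + 1))
              else (fcnt n m (h + 1) + (n - 1) * fcnt n m (h + 2))) := by
            refine Finset.sum_congr rfl (fun a _ => ?_)
            rw [Finset.sum_congr rfl (fun b _ => hval a b)]
            by_cases had : a = d
            · rw [if_pos had]
              simp only [if_pos had]
              exact sum_ite_eq_card c (fcnt n m h) (fcnt n m (h + 1))
            · rw [if_neg had]
              simp only [if_neg had]
              exact sum_ite_eq_card a (fcnt n m (h + 1)) (fcnt n m (h + 2))
        _ = fcnt n m h + (n - 1) * fcnt n m (h + 1)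
              + (n - 1) * (fcnt n m (h + 1) + (n - 1) * fcnt n m (h + 2)) :=
            sum_ite_eq_card d _ _
        _ = fcnt n m h + 2 * (n - 1) * fcnt n m (h + 1) + (n - 1) ^ 2 * fcnt n m (h + 2) := by
            ring
        _ = fcnt n (m + 1) (h + 1) := rfl
        _ = fcnt n (m + 1) (((d, false) :: (c, true) :: S').length / 2) := by rw [hlen]

lemma fcnt_le (hn : 2 ≤ n) : ∀ m h, fcnt n m h * (n - 1) ^ h ≤ (4 * (n - 1)) ^ m
  | 0, 0 => by simp [fcnt]
  | 0, h + 1 => by simp [fcnt]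
  | m + 1, 0 => by
    have h0 := fcnt_le hn m 0
    have h1 := fcnt_le hn m 1
    simp only [pow_zero, mul_one] at h0 ⊢
    have e1 : n * fcnt n m 0 + n * (n - 1) * fcnt n m 1
        = n * (fcnt n m 0 * (n-1)^0) + n * (fcnt n m 1 * (n - 1) ^ 1) := by ring
    show n * fcnt n m 0 + n * (n - 1) * fcnt n m 1 ≤ (4 * (n - 1)) ^ (m + 1)
    rw [e1, pow_succ]
    calc n * (fcnt n m 0 * (n-1)^0) + n * (fcnt n m 1 * (n - 1) ^ 1)
        ≤ n * (4 * (n-1))^m + n * (4 * (n-1))^m :=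
          Nat.add_le_add (Nat.mul_le_mul_left n (fcnt_le hn m 0)) (Nat.mul_le_mul_left n (fcnt_le hn m 1))
      _ = 2 * n * (4 * (n-1))^m := by ring
      _ ≤ (4 * (n - 1)) * (4 * (n-1))^m := Nat.mul_le_mul_right _ (by omega)
      _ = (4 * (n - 1)) ^ m * (4 * (n - 1)) := by ring
  | m + 1, h + 1 => by
    show (fcnt n m h + 2 * (n - 1) * fcnt n m (h + 1) + (n - 1) ^ 2 * fcnt n m (h + 2))
        * (n - 1) ^ (h + 1) ≤ (4 * (n - 1)) ^ (m + 1)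
    have e1 : (fcnt n m h + 2 * (n - 1) * fcnt n m (h + 1) + (n - 1) ^ 2 * fcnt n m (h + 2))
        * (n - 1) ^ (h + 1)
      = (n - 1) * (fcnt n m h * (n - 1) ^ h) + 2 * (n - 1) * (fcnt n m (h + 1) * (n - 1) ^ (h + 1))
        + (n - 1) * (fcnt n m (h + 2) * (n - 1) ^ (h + 2)) := by ring
    rw [e1, pow_succ]
    calc (n - 1) * (fcnt n m h * (n - 1) ^ h) + 2 * (n - 1) * (fcnt n m (h + 1) * (n - 1) ^ (h + 1))
        + (n - 1) * (fcnt n m (h + 2) * (n - 1) ^ (h + 2))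
        ≤ (n - 1) * (4 * (n-1))^m + 2 * (n - 1) * (4 * (n-1))^m + (n - 1) * (4 * (n-1))^m :=
          Nat.add_le_add (Nat.add_le_add (Nat.mul_le_mul_left _ (fcnt_le hn m h))
            (Nat.mul_le_mul_left _ (fcnt_le hn m (h+1)))) (Nat.mul_le_mul_left _ (fcnt_le hn m (h+2)))
      _ = (4 * (n - 1)) ^ m * (4 * (n - 1)) := by ring

lemma one_le_fcnt (hn : 2 ≤ n) : ∀ m h, h ≤ m → 1 ≤ fcnt n m h
  | 0, 0, _ => by simp [fcnt]
  | m + 1, 0, _ => by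
    have := one_le_fcnt hn m 0 (Nat.zero_le m)
    show 1 ≤ n * fcnt n m 0 + n * (n - 1) * fcnt n m 1
    have : 1 ≤ n * fcnt n m 0 := Nat.one_le_iff_ne_zero.mpr (by positivity)
    omega
  | m + 1, h + 1, hh => by
    have := one_le_fcnt hn m h (by omega)
    show 1 ≤ fcnt n m h + 2 * (n - 1) * fcnt n m (h + 1) + (n - 1) ^ 2 * fcnt n m (h + 2)
    omega

/-! ### Lower bound for `fcnt` via a sine test vector -/

section Lower

variable (n H : ℕ)

noncomputable def alf : ℝ := Real.pi / (H + 1)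

noncomputable def psi (h : ℕ) : ℝ := Real.sin (h * alf H)

noncomputable def mue : ℝ := 2 * ((n : ℝ) - 1) * (1 + Real.cos (alf H))

variable {n H}

lemma alf_pos : 0 < alf H := by
  apply div_pos Real.pi_pos
  positivity

lemma psi_nonneg {h : ℕ} (hh : h ≤ H + 1) : 0 ≤ psi H h := by
  apply Real.sin_nonneg_of_nonneg_of_le_pi
  · exact mul_nonneg (Nat.cast_nonneg h) alf_pos.le
  · rw [alf]
    rw [div_eq_inv_mul, ← mul_assoc]
    calc (h : ℝ) * (H + 1 : ℝ)⁻¹ * Real.pi ≤ 1 * Real.pi := by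
          apply mul_le_mul_of_nonneg_right _ Real.pi_pos.le
          rw [mul_inv_le_iff₀ (by positivity), one_mul]
          exact_mod_cast Nat.cast_le.mpr (by exact_mod_cast hh)
      _ = Real.pi := one_mul _

lemma psi_zero : psi H 0 = 0 := by simp [psi]

lemma psi_top : psi H (H + 1) = 0 := by
  have : ((H + 1 : ℕ) : ℝ) * alf H = Real.pi := by
    rw [alf]
    field_simp
    push_cast; ring
  rw [psi, this, Real.sin_pi]

lemma psi_rec (h : ℕ) :
    psi H h + psi H (h + 2) = 2 * Real.cos (alf H) * psi H (h + 1) := by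
  have e1 : ((h : ℕ) : ℝ) * alf H = ((h + 1 : ℕ) : ℝ) * alf H - alf H := by
    push_cast; ring
  have e2 : ((h + 2 : ℕ) : ℝ) * alf H = ((h + 1 : ℕ) : ℝ) * alf H + alf H := by
    push_cast; ring
  rw [psi, psi, psi, e1, e2, Real.sin_sub, Real.sin_add]
  ring

lemma cos_alf_nonneg (hH : 1 ≤ H) : 0 ≤ Real.cos (alf H) := by
  apply Real.cos_nonneg_of_mem_Icc
  constructor
  · linarith [alf_pos (H := H), Real.pi_pos]
  · rw [alf, div_le_div_iff₀ (by positivity) (by norm_num)]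
    have h2 : (2 : ℝ) ≤ (H : ℝ) + 1 := by
      have : (1 : ℝ) ≤ (H : ℝ) := by exact_mod_cast hH
      linarith
    nlinarith [Real.pi_pos]

lemma sub_one_pos (hn : 2 ≤ n) : (0 : ℝ) < (n : ℝ) - 1 := by
  have : (2 : ℝ) ≤ (n : ℝ) := by exact_mod_cast hn
  linarith

lemma mue_pos (hn : 2 ≤ n) (hH : 1 ≤ H) : 0 < mue n H := by
  have h2 : 0 < 1 + Real.cos (alf H) := by
    linarith [cos_alf_nonneg (H := H) hH]
  have := sub_one_pos (n := n) hn
  rw [mue]; positivity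

lemma cast_sub_one (hn : 2 ≤ n) : (((n - 1 : ℕ)) : ℝ) = (n : ℝ) - 1 := by
  have : 1 ≤ n := by omega
  push_cast [this]
  ring

lemma fcnt_lower (hn : 2 ≤ n) (hH : 1 ≤ H) :
    ∀ m, H ≤ m → ∀ h, h ≤ H + 1 →
      mue n H ^ (m - H) * ((n : ℝ) - 1) * psi H h ≤ (fcnt n m h : ℝ) * ((n : ℝ) - 1) ^ h := by
  have he : (0:ℝ) < (n : ℝ) - 1 := sub_one_pos hn
  have hmu : 0 < mue n H := mue_pos hn hH
  intro m hm
  induction m, hm using Nat.le_induction with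
  | base =>
    intro h hh
    rw [Nat.sub_self, pow_zero, one_mul]
    rcases Nat.eq_zero_or_pos h with h0 | hpos
    · subst h0
      rw [psi_zero, mul_zero]
      positivity
    rcases Nat.lt_or_ge h (H + 1) with hlt | hge
    · -- 1 ≤ h ≤ H
      have h1 : 1 ≤ fcnt n H h := one_le_fcnt hn H h (by omega)
      calc ((n : ℝ) - 1) * psi H h ≤ ((n : ℝ) - 1) * 1 := by
            have := Real.sin_le_one ((h : ℝ) * alf H)
            have := psi_nonneg (H := H) (h := h) hh
            apply mul_le_mul_of_nonneg_left _ he.le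
            exact Real.sin_le_one _
        _ = ((n : ℝ) - 1) ^ 1 := by ring
        _ ≤ ((n : ℝ) - 1) ^ h := by
            apply pow_le_pow_right₀ _ hpos
            have : (2:ℝ) ≤ (n:ℝ) := by exact_mod_cast hn
            linarith
        _ = 1 * ((n : ℝ) - 1) ^ h := by ring
        _ ≤ (fcnt n H h : ℝ) * ((n : ℝ) - 1) ^ h := by
            apply mul_le_mul_of_nonneg_right _ (by positivity)
            exact_mod_cast h1
    · -- h = H + 1
      have : h = H + 1 := by omega
      subst this
      rw [psi_top, mul_zero]
      positivity
  | succ m hm ih =>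
    intro h hh
    rcases Nat.eq_zero_or_pos h with h0 | hpos
    · subst h0
      rw [psi_zero, mul_zero]
      positivity
    rcases Nat.lt_or_ge h (H + 1) with hlt | hge
    swap
    · have : h = H + 1 := by omega
      subst this
      rw [psi_top, mul_zero]
      positivity
    obtain ⟨h', rfl⟩ : ∃ h', h = h' + 1 := ⟨h - 1, by omega⟩
    have ih0 := ih h' (by omega)
    have ih1 := ih (h' + 1) (by omega)
    have ih2 := ih (h' + 2) (by omega)
    have hcast : (fcnt n (m + 1) (h' + 1) : ℝ)
        = (fcnt n m h' : ℝ) + 2 * ((n:ℝ) - 1) * (fcnt n m (h' + 1) : ℝ)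
          + ((n:ℝ) - 1) ^ 2 * (fcnt n m (h' + 2) : ℝ) := by
      show ((fcnt n m h' + 2 * (n - 1) * fcnt n m (h' + 1) + (n - 1) ^ 2 * fcnt n m (h' + 2) : ℕ) : ℝ) = _
      push_cast [cast_sub_one hn]
      ring
    have key : (fcnt n (m + 1) (h' + 1) : ℝ) * ((n : ℝ) - 1) ^ (h' + 1)
        = ((n:ℝ) - 1) * ((fcnt n m h' : ℝ) * ((n:ℝ)-1) ^ h')
          + 2 * ((n:ℝ) - 1) * ((fcnt n m (h' + 1) : ℝ) * ((n:ℝ)-1) ^ (h' + 1))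
          + ((n:ℝ) - 1) * ((fcnt n m (h' + 2) : ℝ) * ((n:ℝ)-1) ^ (h' + 2)) := by
      rw [hcast]; ring
    rw [key]
    have step : ((n:ℝ) - 1) * (mue n H ^ (m - H) * ((n : ℝ) - 1) * psi H h')
          + 2 * ((n:ℝ) - 1) * (mue n H ^ (m - H) * ((n : ℝ) - 1) * psi H (h' + 1))
          + ((n:ℝ) - 1) * (mue n H ^ (m - H) * ((n : ℝ) - 1) * psi H (h' + 2))
        = mue n H ^ (m + 1 - H) * ((n : ℝ) - 1) * psi H (h' + 1) := by
      have hrec := psi_rec (H := H) h'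
      have hpow : mue n H ^ (m + 1 - H) = mue n H ^ (m - H) * mue n H := by
        rw [← pow_succ]
        congr 1
        omega
      rw [hpow]
      unfold mue
      linear_combination (((n:ℝ) - 1) ^ 2
        * ((2 * ((n:ℝ) - 1) * (1 + Real.cos (alf H))) ^ (m - H))) * hrec
    calc mue n H ^ (m + 1 - H) * ((n : ℝ) - 1) * psi H (h' + 1)
        = ((n:ℝ) - 1) * (mue n H ^ (m - H) * ((n : ℝ) - 1) * psi H h')
          + 2 * ((n:ℝ) - 1) * (mue n H ^ (m - H) * ((n : ℝ) - 1) * psi H (h' + 1))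
          + ((n:ℝ) - 1) * (mue n H ^ (m - H) * ((n : ℝ) - 1) * psi H (h' + 2)) := step.symm
      _ ≤ _ := by
          apply add_le_add (add_le_add _ _) _
          · exact mul_le_mul_of_nonneg_left ih0 he.le
          · apply mul_le_mul_of_nonneg_left ih1 (by linarith)
          · exact mul_le_mul_of_nonneg_left ih2 he.le

lemma fcnt_zero_lower (hn : 2 ≤ n) (hH : 1 ≤ H) (m : ℕ) (hm : H ≤ m) :
    mue n H ^ (m - H) * Real.sin (alf H) ≤ (fcnt n (m + 1) 0 : ℝ) := by
  have he : (0:ℝ) < (n : ℝ) - 1 := sub_one_pos hn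
  have h1 := fcnt_lower hn hH m hm 1 (by omega)
  have hpsi1 : psi H 1 = Real.sin (alf H) := by
    rw [psi]; norm_num
  rw [hpsi1] at h1
  have hf1 : mue n H ^ (m - H) * Real.sin (alf H) ≤ (fcnt n m 1 : ℝ) := by
    have hx : mue n H ^ (m - H) * ((n:ℝ) - 1) * Real.sin (alf H)
        = (mue n H ^ (m - H) * Real.sin (alf H)) * ((n:ℝ) - 1) := by ring
    have hy : (fcnt n m 1 : ℝ) * ((n:ℝ) - 1) ^ 1 = (fcnt n m 1 : ℝ) * ((n:ℝ) - 1) := by ring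
    rw [hx, hy] at h1
    exact le_of_mul_le_mul_right h1 he
  have hstep : (fcnt n m 1 : ℝ) ≤ (fcnt n (m + 1) 0 : ℝ) := by
    have : fcnt n m 1 ≤ fcnt n (m + 1) 0 := by
      show fcnt n m 1 ≤ n * fcnt n m 0 + n * (n - 1) * fcnt n m 1
      have h2 : 1 * fcnt n m 1 ≤ n * (n-1) * fcnt n m 1 := by
        apply Nat.mul_le_mul_right
        have : 1 ≤ n - 1 := by omega
        calc 1 = 1 * 1 := rfl
          _ ≤ n * (n - 1) := Nat.mul_le_mul (by omega) this
      omega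
    exact_mod_cast this
  linarith

end Lower

end LFreeAux


set_option linter.unusedSectionVars false

namespace LFreeAux

section Alg

variable {n : ℕ} {M : Type*} [Ring M] [StarRing M] [Algebra ℂ M]

def toM (u : Fin n → M) (ℓ : Ltr n) : M := if ℓ.2 then u ℓ.1 else star (u ℓ.1)

def Wm (u : Fin n → M) (q : List (Fin n × Fin n)) : M := ((letters q).map (toM u)).prod

@[simp] lemma Wm_nil (u : Fin n → M) : Wm u [] = 1 := rfl

lemma Wm_cons (u : Fin n → M) (p : Fin n × Fin n) (q : List (Fin n × Fin n)) :
    Wm u (p :: q) = u p.1 * (star (u p.2) * Wm u q) := by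
  simp [Wm, toM, mul_assoc]

lemma Wm_append (u : Fin n → M) (q₁ q₂ : List (Fin n × Fin n)) :
    Wm u (q₁ ++ q₂) = Wm u q₁ * Wm u q₂ := by
  simp [Wm, letters_append]

lemma Wm_del_pair (u : Fin n → M) (hu : ∀ i, IsUnitary (u i)) (a : Fin n)
    (q₁ q₂ : List (Fin n × Fin n)) :
    Wm u (q₁ ++ (a, a) :: q₂) = Wm u (q₁ ++ q₂) := by
  rw [Wm_append, Wm_append, Wm_cons]
  congr 1
  rw [← mul_assoc, (hu a).2, one_mul]

lemma Wm_del_cross (u : Fin n → M) (hu : ∀ i, IsUnitary (u i)) (a b c : Fin n)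
    (q₁ q₂ : List (Fin n × Fin n)) :
    Wm u (q₁ ++ (a, b) :: (b, c) :: q₂) = Wm u (q₁ ++ (a, c) :: q₂) := by
  rw [Wm_append, Wm_append, Wm_cons, Wm_cons, Wm_cons]
  congr 1
  show u a * (star (u b) * (u b * (star (u c) * Wm u q₂))) = u a * (star (u c) * Wm u q₂)
  rw [← mul_assoc (star (u b)), (hu b).1, one_mul]

lemma triv_del_pair (a : Fin n) (q₁ q₂ : List (Fin n × Fin n)) :
    redP [] (q₁ ++ (a, a) :: q₂) = redP [] (q₁ ++ q₂) := by
  rw [redP_eq_foldl, redP_eq_foldl, letters_append, letters_append, letters_cons]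
  have : ((a, false) : Ltr n) = linv (a, true) := rfl
  rw [this]
  exact red_del (letters q₁) (a, true) (letters q₂)

lemma triv_del_cross (a b c : Fin n) (q₁ q₂ : List (Fin n × Fin n)) :
    redP [] (q₁ ++ (a, b) :: (b, c) :: q₂) = redP [] (q₁ ++ (a, c) :: q₂) := by
  rw [redP_eq_foldl, redP_eq_foldl, letters_append, letters_append, letters_cons,
    letters_cons, letters_cons]
  have hlv : ((b, true) : Ltr n) = linv (b, false) := rfl
  have h1 : letters q₁ ++ (a, true) :: (b, false) :: (b, true) :: (c, false) :: letters q₂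
      = (letters q₁ ++ [((a : Fin n), true)]) ++ (b, false) :: (b, true) :: ((c, false) :: letters q₂) := by
    simp
  have h2 : letters q₁ ++ (a, true) :: (c, false) :: letters q₂
      = (letters q₁ ++ [((a : Fin n), true)]) ++ ((c, false) :: letters q₂) := by
    simp
  rw [h1, h2, hlv]
  exact red_del _ (b, false) _

lemma letters_chain (q : List (Fin n × Fin n))
    (hA : ∀ (j : ℕ) (hj : j < q.length), (q[j]'hj).1 ≠ (q[j]'hj).2)
    (hB : ∀ (j : ℕ) (hj : j + 1 < q.length),
      (q[j]'(by omega)).2 ≠ (q[j+1]'hj).1) :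
    List.Chain' (fun a b => b ≠ linv (a : Ltr n)) (letters q) := by
  induction q with
  | nil => simp [List.Chain']
  | cons p q ih =>
    have h0 : p.1 ≠ p.2 := hA 0 (by simp)
    have hc1 : ((p.2, false) : Ltr n) ≠ linv (p.1, true) := by
      simp only [linv, Bool.not_true, ne_eq, Prod.mk.injEq, not_and]
      exact fun h => absurd h.symm h0
    have htail : List.Chain' (fun a b => b ≠ linv (a : Ltr n)) ((p.2, false) :: letters q) := by
      cases q with
      | nil => simp [List.Chain']
      | cons p' q' =>
        have hb : p.2 ≠ p'.1 := hB 0 (by simp)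
        have hc2 : ((p'.1, true) : Ltr n) ≠ linv (p.2, false) := by
          simp only [linv, Bool.not_false, ne_eq, Prod.mk.injEq, not_and]
          exact fun h => absurd h.symm hb
        have ih' := ih (fun j hj => by
            have := hA (j+1) (by simpa using Nat.succ_lt_succ hj)
            simpa using this)
          (fun j hj => by
            have := hB (j+1) (by simpa using Nat.succ_lt_succ hj)
            simpa using this)
        rw [letters_cons] at ih' ⊢
        exact List.isChain_cons_cons.mpr ⟨hc2, ih'⟩
    exact List.isChain_cons_cons.mpr ⟨hc1, htail⟩

lemma letters_getElem (q : List (Fin n × Fin n)) :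
    ∀ (s : ℕ) (hs : s < (letters q).length),
      (letters q)[s]'hs = if s % 2 = 0
        then (((q[s/2]'(by rw [letters_length] at hs; omega)).1, true) : Ltr n)
        else ((q[s/2]'(by rw [letters_length] at hs; omega)).2, false) := by
  induction q with
  | nil => intro s hs; simp at hs
  | cons p q ih =>
    intro s hs
    match s with
    | 0 => simp
    | 1 => simp
    | (s + 2) =>
      have hs' : s < (letters q).length := by
        rw [letters_length] at hs ⊢
        simp [List.length_cons] at hs
        omega
      have e1 : (letters (p :: q))[s + 2]'hs = (letters q)[s]'hs' := by
        simp [letters_cons]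
      rw [e1, ih s hs']
      have hmod : (s + 2) % 2 = s % 2 := by omega
      have hdiv : (s + 2) / 2 = s / 2 + 1 := by omega
      simp only [hmod, hdiv, List.getElem_cons_succ]

lemma tau_word {τ : M → ℂ} (u : Fin n → M) (hu : ∀ i, IsUnitary (u i))
    (h1 : τ 1 = 1) (hL : IsLFree τ u) :
    ∀ (N : ℕ) (q : List (Fin n × Fin n)), q.length ≤ N →
      τ (Wm u q) = if redP [] q = [] then 1 else 0 := by
  intro N
  induction N with
  | zero =>
    intro q hq
    have : q = [] := List.length_eq_zero_iff.mp (Nat.le_zero.mp hq)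
    subst this
    have hr : redP ([] : List (Ltr n)) ([] : List (Fin n × Fin n)) = [] := rfl
    rw [Wm_nil, h1, if_pos hr]
  | succ N ih =>
    intro q hq
    by_cases hA : ∃ (j : ℕ) (hj : j < q.length), (q[j]'hj).1 = (q[j]'hj).2
    · obtain ⟨j, hj, he⟩ := hA
      have hpair : (q[j]'hj) = ((q[j]'hj).1, (q[j]'hj).1) := Prod.ext rfl he.symm
      have hsplit : q = q.take j ++ ((q[j]'hj).1, (q[j]'hj).1) :: q.drop (j + 1) := by
        conv_lhs => rw [← List.take_append_drop j q]
        rw [List.drop_eq_getElem_cons hj, ← hpair]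
      have hq' : (q.take j ++ q.drop (j + 1)).length ≤ N := by
        have hlenq := congrArg List.length hsplit
        rw [List.length_append, List.length_cons] at hlenq
        rw [List.length_append]
        omega
      calc τ (Wm u q) = τ (Wm u (q.take j ++ ((q[j]'hj).1, (q[j]'hj).1) :: q.drop (j + 1))) := by
            rw [← hsplit]
        _ = τ (Wm u (q.take j ++ q.drop (j + 1))) := by rw [Wm_del_pair u hu]
        _ = if redP [] (q.take j ++ q.drop (j + 1)) = [] then 1 else 0 := ih _ hq'
        _ = if redP [] q = [] then 1 else 0 := by
            rw [← triv_del_pair ((q[j]'hj).1) (q.take j) (q.drop (j + 1)), ← hsplit]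
    by_cases hB : ∃ (j : ℕ) (hj : j + 1 < q.length), (q[j]'(by omega)).2 = (q[j+1]'hj).1
    · obtain ⟨j, hj, he⟩ := hB
      have hj0 : j < q.length := by omega
      set a := (q[j]'hj0).1 with ha
      set b := (q[j]'hj0).2 with hb
      set c := (q[j+1]'hj).2 with hc
      have e1 : (q[j]'hj0) = (a, b) := Prod.ext rfl rfl
      have e2 : (q[j+1]'hj) = (b, c) := Prod.ext he.symm rfl
      have hsplit : q = q.take j ++ (a, b) :: (b, c) :: q.drop (j + 2) := by
        conv_lhs => rw [← List.take_append_drop j q]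
        rw [List.drop_eq_getElem_cons hj0, List.drop_eq_getElem_cons hj, e1, e2]
      have hq' : (q.take j ++ (a, c) :: q.drop (j + 2)).length ≤ N := by
        have hlenq := congrArg List.length hsplit
        rw [List.length_append, List.length_cons, List.length_cons] at hlenq
        rw [List.length_append, List.length_cons]
        omega
      calc τ (Wm u q) = τ (Wm u (q.take j ++ (a, b) :: (b, c) :: q.drop (j + 2))) := by rw [← hsplit]
        _ = τ (Wm u (q.take j ++ (a, c) :: q.drop (j + 2))) := by rw [Wm_del_cross u hu]
        _ = if redP [] (q.take j ++ (a, c) :: q.drop (j + 2)) = [] then 1 else 0 := ih _ hq'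
        _ = if redP [] q = [] then 1 else 0 := by
            rw [← triv_del_cross a b c (q.take j) (q.drop (j + 2)), ← hsplit]
    -- no cancellations: the word is reduced
    push_neg at hA hB
    rcases List.eq_nil_or_concat q with hnil | _
    · subst hnil
      have hr : redP ([] : List (Ltr n)) ([] : List (Fin n × Fin n)) = [] := rfl
      rw [Wm_nil, h1, if_pos hr]
    have hqne : q ≠ [] := by
      rintro rfl
      simp_all
    have hlen : 1 ≤ q.length := List.length_pos_iff.mpr hqne
    have hchain := letters_chain q hA hB
    have hred : redP [] q = (letters q).reverse := by
      rw [redP_eq_foldl]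
      exact red_reduced _ hchain
    have hredne : redP [] q ≠ [] := by
      rw [hred]
      simp only [ne_eq, List.reverse_eq_nil_iff]
      intro hcon
      have h2 := letters_length q
      rw [hcon] at h2
      simp only [List.length_nil] at h2
      omega
    rw [if_neg hredne]
    -- apply L-freeness
    have h2l : ∀ s : ℕ, s < 2 * q.length → s / 2 < q.length := by omega
    set i : Fin (2 * q.length) → Fin n := fun s =>
      if (s : ℕ) % 2 = 0 then (q[(s : ℕ)/2]'(h2l s s.2)).1 else (q[(s : ℕ)/2]'(h2l s s.2)).2
      with hi
    have hW : Wm u q = LWord u i := by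
      rw [Wm, LWord]
      congr 1
      apply List.ext_getElem
      · simp [letters_length]
      · intro s hs1 hs2
        have hs : s < 2 * q.length := by simpa [letters_length] using hs1
        rw [List.getElem_map, letters_getElem q s (by rwa [letters_length]), List.getElem_ofFn]
        by_cases hp : s % 2 = 0 <;> simp [toM, hi, hp]
    have hcond : ∀ s t : Fin (2 * q.length), (t : ℕ) = (s : ℕ) + 1 → i s ≠ i t := by
      intro s t hts
      have hs2 := s.isLt
      have ht2 := t.isLt
      rw [hi]
      simp only [hts]
      by_cases hp : (s : ℕ) % 2 = 0
      · have hpt : ¬ (((s : ℕ) + 1) % 2 = 0) := by omega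
        have hdiv : ((s : ℕ) + 1) / 2 = (s : ℕ) / 2 := by omega
        rw [if_pos hp, if_neg hpt]
        simp only [hdiv]
        exact hA ((s : ℕ) / 2) (by omega)
      · have hpt : ((s : ℕ) + 1) % 2 = 0 := by omega
        have hdiv : ((s : ℕ) + 1) / 2 = (s : ℕ) / 2 + 1 := by omega
        rw [if_neg hp, if_pos hpt]
        simp only [hdiv]
        intro hcon
        exact hB ((s : ℕ) / 2) (by omega) hcon
    have := (hL q.length hlen i hcond).1
    rw [hW, this]

lemma pow_expand (u : Fin n → M) (k : ℕ) :
    ((∑ i, u i) * star (∑ i, u i)) ^ k = ∑ v : Fin k → Fin n × Fin n, Wm u (List.ofFn v) := by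
  induction k with
  | zero =>
    rw [pow_zero, Fintype.sum_unique]
    simp
  | succ k ih =>
    rw [pow_succ', ih]
    have hb : (∑ i, u i) * star (∑ i, u i) = ∑ p : Fin n × Fin n, u p.1 * star (u p.2) := by
      calc (∑ i, u i) * star (∑ i, u i) = ∑ i : Fin n, ∑ j : Fin n, u i * star (u j) := by
            rw [star_sum, Finset.sum_mul_sum]
        _ = ∑ p : Fin n × Fin n, u p.1 * star (u p.2) :=
            (Fintype.sum_prod_type (fun p : Fin n × Fin n => u p.1 * star (u p.2))).symm
    rw [hb, Finset.sum_mul_sum]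
    have hterm : ∀ (p : Fin n × Fin n) (w : Fin k → Fin n × Fin n),
        (u p.1 * star (u p.2)) * Wm u (List.ofFn w) = Wm u (List.ofFn (Fin.cons p w)) := by
      intro p w
      have hofn : List.ofFn (Fin.cons p w) = p :: List.ofFn w := by
        rw [List.ofFn_succ]
        simp
      rw [hofn, Wm_cons, mul_assoc]
    calc (∑ p : Fin n × Fin n, ∑ w : Fin k → Fin n × Fin n,
            (u p.1 * star (u p.2)) * Wm u (List.ofFn w))
        = ∑ p : Fin n × Fin n, ∑ w : Fin k → Fin n × Fin n,
            Wm u (List.ofFn (Fin.cons p w)) := by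
          exact Finset.sum_congr rfl (fun p _ => Finset.sum_congr rfl (fun w _ => hterm p w))
      _ = ∑ pw : (Fin n × Fin n) × (Fin k → Fin n × Fin n),
            Wm u (List.ofFn (Fin.cons pw.1 pw.2)) :=
          (Fintype.sum_prod_type (fun pw : (Fin n × Fin n) × (Fin k → Fin n × Fin n) => Wm u (List.ofFn (Fin.cons pw.1 pw.2)))).symm
      _ = ∑ v : Fin (k + 1) → Fin n × Fin n, Wm u (List.ofFn v) :=
          Fintype.sum_equiv (Fin.consEquiv (fun _ => Fin n × Fin n))
            (fun pw => Wm u (List.ofFn (Fin.cons pw.1 pw.2)))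
            (fun v => Wm u (List.ofFn v)) (fun pw => rfl)

end Alg

end LFreeAux

section AuxC

variable {A : Type*} [CStarAlgebra A]

lemma LFree.exists_sq_eq (a : A) (g : ℝ → ℝ) (hg : Continuous g)
    (hg0 : ∀ r ∈ spectrum ℝ a, 0 ≤ g r) :
    ∃ s : A, star s * s = cfc g a := by
  refine ⟨cfc (fun r => Real.sqrt (g r)) a, ?_⟩
  have hsa : IsSelfAdjoint (cfc (fun r => Real.sqrt (g r)) a) := cfc_predicate _ a
  rw [hsa.star_eq]
  have hc : ContinuousOn (fun r => Real.sqrt (g r)) (spectrum ℝ a) :=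
    (Real.continuous_sqrt.comp hg).continuousOn
  have hm := cfc_mul (fun r => Real.sqrt (g r)) (fun r => Real.sqrt (g r)) a hc hc
  rw [← hm]
  exact cfc_congr (fun r hr => Real.mul_self_sqrt (hg0 r hr))

lemma LFree.exists_spectrum_abs_norm [Nontrivial A] (a : A) (ha : IsSelfAdjoint a) :
    ∃ r : ℝ, r ∈ spectrum ℝ a ∧ |r| = ‖a‖ := by
  obtain ⟨z, hz, hzn⟩ := spectrum.exists_nnnorm_eq_spectralRadius a
  have hsr := ha.spectralRadius_eq_nnnorm
  rw [hsr] at hzn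
  have hn : ‖z‖ = ‖a‖ := by
    have h2 : ‖z‖₊ = ‖a‖₊ := ENNReal.coe_injective hzn
    exact congrArg NNReal.toReal h2
  have hre := ha.mem_spectrum_eq_re hz
  refine ⟨z.re, ?_, ?_⟩
  · rw [hre] at hz
    have := spectrum.algebraMap_mem_iff (S := ℂ) (R := ℝ) (A := A) (a := a) (r := z.re)
    apply this.mp
    simpa using hz
  · rw [hre] at hn
    simpa using hn

lemma LFree.abs_le_norm_of_mem [Nontrivial A] {a : A} {r : ℝ} (hr : r ∈ spectrum ℝ a) :
    |r| ≤ ‖a‖ := by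
  have h2 : ((r : ℂ)) ∈ spectrum ℂ a := by
    have := spectrum.algebraMap_mem_iff (S := ℂ) (R := ℝ) (A := A) (a := a) (r := r)
    simpa using this.mpr hr
  have := spectrum.norm_le_norm_of_mem h2
  simpa using this

lemma LFree.cfc_pow_eq (m : ℕ) (a : A) (ha : IsSelfAdjoint a) :
    cfc (fun r : ℝ => r ^ m) a = a ^ m := by
  have := cfc_pow (R := ℝ) id m a
  rw [cfc_id ℝ a] at this
  simpa using this

end AuxC

set_option maxHeartbeats 2000000 in
/-- An L-free family of `n ≥ 2` unitaries satisfies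
`‖u₁ + ⋯ + uₙ‖ = 2√(n-1)`. -/
theorem norm_sum_LFree_unitaries
    {M : Type*} [NormedRing M] [StarRing M] [CStarRing M] [NormedAlgebra ℂ M]
    [StarModule ℂ M] [CompleteSpace M]
    (τ : M → ℂ) (hτ : IsTracialState τ) (hτf : IsFaithful τ)
    (n : ℕ) (hn : 2 ≤ n)
    (u : Fin n → M) (hu : ∀ i, IsUnitary (u i)) (hL : IsLFree τ u) :
    ‖∑ i, u i‖ = 2 * Real.sqrt ((n : ℝ) - 1) := by
  classical
  letI : CStarAlgebra M := {}
  obtain ⟨hlin, h1, hpos, htr⟩ := hτ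
  have h0 : τ 0 = 0 := by
    have h := hlin 1 0 0
    simp only [one_smul, add_zero, one_mul] at h
    have h2 : τ 0 + τ 0 = τ 0 + 0 := by rw [← h, add_zero]
    exact (add_left_cancel h2)
  set τL : M →ₗ[ℂ] ℂ :=
    { toFun := τ
      map_add' := fun x y => by simpa using hlin 1 x y
      map_smul' := fun c y => by simpa [h0] using hlin c y 0 } with hτL
  have hτLA : ∀ y : M, τL y = τ y := fun _ => rfl
  set x := ∑ i, u i with hx
  set b := x * star x with hbdef
  have hbsa : IsSelfAdjoint b := by
    rw [hbdef]
    simp [IsSelfAdjoint, star_mul, star_star]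
  haveI hnt : Nontrivial M := by
    refine ⟨1, 0, fun hcon => ?_⟩
    rw [hcon, h0] at h1
    exact one_ne_zero h1.symm
  have he1 : (1 : ℝ) ≤ (n : ℝ) - 1 := by
    have : (2 : ℝ) ≤ (n : ℝ) := by exact_mod_cast hn
    linarith
  -- moments
  have hmom : ∀ k : ℕ, τ (b ^ k) = ((LFreeAux.fcnt n k 0 : ℕ) : ℂ) := by
    intro k
    rw [hbdef, hx, LFreeAux.pow_expand u k]
    have hs := map_sum τL (fun v : Fin k → Fin n × Fin n => LFreeAux.Wm u (List.ofFn v))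
      Finset.univ
    rw [show τ (∑ v : Fin k → Fin n × Fin n, LFreeAux.Wm u (List.ofFn v))
        = ∑ v : Fin k → Fin n × Fin n, τ (LFreeAux.Wm u (List.ofFn v)) from hs]
    rw [Finset.sum_congr rfl (fun v _ =>
      LFreeAux.tau_word u hu h1 hL (List.ofFn v).length (List.ofFn v) (le_refl _))]
    rw [Finset.sum_boole]
    congr 1
    have hcard : (Finset.univ.filter
        (fun v : Fin k → Fin n × Fin n => LFreeAux.redP [] (List.ofFn v) = [])).card
        = LFreeAux.Tcnt n k [] := (Fintype.card_subtype _).symm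
    rw [hcard, LFreeAux.Tcnt_eq_fcnt k [] LFreeAux.GS.nil]
    norm_num
  set N := ‖b‖ with hN
  have hNnn : (0:ℝ) ≤ N := norm_nonneg b
  have tnn : ∀ g : ℝ → ℝ, Continuous g → (∀ r ∈ spectrum ℝ b, 0 ≤ g r) → 0 ≤ τ (cfc g b) := by
    intro g hg hg0
    obtain ⟨s, hs⟩ := LFree.exists_sq_eq b g hg hg0
    rw [← hs]
    exact hpos s
  have hspec : ∀ r ∈ spectrum ℝ b, |r| ≤ N := fun r hr => LFree.abs_le_norm_of_mem hr
  have htau_smul_one : ∀ r : ℝ, τ (r • (1 : M)) = (r : ℂ) := by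
    intro r
    have h2 : (r : ℝ) • (1 : M) = ((r : ℂ)) • (1 : M) := (algebraMap_smul ℂ r (1:M)).symm
    rw [h2, ← hτLA, map_smul, hτLA, h1]
    simp
  -- upper moment bound: counts ≤ N ^ (2m)
  have hub : ∀ m : ℕ, ((LFreeAux.fcnt n (2*m) 0 : ℕ) : ℝ) ≤ N ^ (2*m) := by
    intro m
    have hg : Continuous (fun r : ℝ => N ^ (2*m) - r ^ (2*m)) := continuous_const.sub (continuous_pow _)
    have hg0 : ∀ r ∈ spectrum ℝ b, 0 ≤ N ^ (2*m) - r ^ (2*m) := by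
      intro r hr
      have h3 : |r| ≤ N := hspec r hr
      have h2 : r ^ (2*m) ≤ N ^ (2*m) := by
        rw [← (even_two_mul m).pow_abs]
        exact pow_le_pow_left₀ (abs_nonneg r) h3 _
      linarith
    have h4 := tnn _ hg hg0
    have h5 : cfc (fun r : ℝ => N ^ (2*m) - r ^ (2*m)) b
        = (N ^ (2*m)) • (1:M) - b ^ (2*m) := by
      rw [cfc_sub _ _ b (by fun_prop) (by fun_prop), cfc_const _ b,
        LFree.cfc_pow_eq _ b hbsa, Algebra.algebraMap_eq_smul_one]
    rw [h5] at h4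
    have h6 : τ ((N ^ (2*m)) • (1:M) - b ^ (2*m))
        = (((N ^ (2*m) - (LFreeAux.fcnt n (2*m) 0 : ℕ) : ℝ)) : ℂ) := by
      rw [← hτLA, map_sub, hτLA, hτLA, htau_smul_one, hmom]
      push_cast
      ring
    rw [h6] at h4
    have h8 := Complex.zero_le_real.mp h4
    linarith
  -- lower bound for N : N ≥ mue n H for every H ≥ 1
  have hNpos : 0 < N := by
    have h2 : (1:ℝ) ≤ ((LFreeAux.fcnt n (2*1) 0 : ℕ) : ℝ) := by
      exact_mod_cast LFreeAux.one_le_fcnt hn 2 0 (by omega)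
    have h4 := hub 1
    have h5 : N ^ (2*1) = N * N := by ring
    rw [h5] at h4
    nlinarith
  have hlow : ∀ H : ℕ, 1 ≤ H → LFreeAux.mue n H ≤ N := by
    intro H hH
    by_contra hcon
    push_neg at hcon
    set μ := LFreeAux.mue n H with hμ
    have hμpos : 0 < μ := LFreeAux.mue_pos hn hH
    have hsin : 0 < Real.sin (LFreeAux.alf H) := by
      apply Real.sin_pos_of_pos_of_lt_pi (LFreeAux.alf_pos)
      rw [LFreeAux.alf]
      rw [div_lt_iff₀ (by positivity)]
      have h2 : (2:ℝ) ≤ (H:ℝ) + 1 := by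
        have : (1:ℝ) ≤ (H:ℝ) := by exact_mod_cast hH
        linarith
      nlinarith [Real.pi_pos]
    -- for every j with H ≤ 2j : μ^(2j - H) sin α ≤ LFreeAux.fcnt (2j+2) ≤ N^(2j+2)
    have hkey : ∀ j : ℕ, H ≤ 2*j + 1 →
        μ ^ (2*j + 1 - H) * Real.sin (LFreeAux.alf H) ≤ N ^ (2*(j+1)) := by
      intro j hj
      have h2 := LFreeAux.fcnt_zero_lower hn hH (2*j+1) hj
      have h3 : (2*j+1) + 1 = 2*(j+1) := by ring
      rw [h3] at h2
      calc μ ^ (2*j + 1 - H) * Real.sin (LFreeAux.alf H)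
          ≤ ((LFreeAux.fcnt n (2*(j+1)) 0 : ℕ) : ℝ) := h2
        _ ≤ N ^ (2*(j+1)) := hub (j+1)
    -- so (μ/N)^(2j+2) is bounded: contradiction with μ > N
    have hratio : 1 < μ / N := (one_lt_div hNpos).mpr hcon
    obtain ⟨m0, hm0⟩ := pow_unbounded_of_one_lt
      ((μ ^ (H + 1)) / Real.sin (LFreeAux.alf H)) hratio
    set j := m0 + H + 1 with hj
    have hjH : H ≤ 2*j + 1 := by omega
    have hk := hkey j hjH
    have h5 : μ ^ (2*(j+1)) * Real.sin (LFreeAux.alf H)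
        ≤ N ^ (2*(j+1)) * μ ^ (H+1) := by
      have hexp2 : (2*j + 1 - H) + (H+1) = 2*(j+1) := by omega
      calc μ ^ (2*(j+1)) * Real.sin (LFreeAux.alf H)
          = (μ ^ (2*j + 1 - H) * Real.sin (LFreeAux.alf H)) * μ ^ (H+1) := by
            rw [← hexp2, pow_add]; ring
        _ ≤ N ^ (2*(j+1)) * μ ^ (H+1) :=
            mul_le_mul_of_nonneg_right hk (by positivity)
    have hNp : (0:ℝ) < N ^ (2*(j+1)) := by positivity
    have hfinal : (μ / N) ^ (2*(j+1)) ≤ μ ^ (H+1) / Real.sin (LFreeAux.alf H) := by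
      rw [div_pow, div_le_div_iff₀ hNp hsin]
      calc μ ^ (2*(j+1)) * Real.sin (LFreeAux.alf H)
          ≤ N ^ (2*(j+1)) * μ ^ (H+1) := h5
        _ = μ ^ (H+1) * N ^ (2*(j+1)) := by ring
    have h7 : (μ/N) ^ m0 ≤ (μ/N) ^ (2*(j+1)) :=
      pow_le_pow_right₀ hratio.le (by omega)
    linarith
  -- N ≥ 4(n-1) via the limit of mue
  have hlim : Filter.Tendsto (fun H : ℕ => LFreeAux.mue n H) Filter.atTop
      (nhds (4 * ((n:ℝ) - 1))) := by
    have h1c : Filter.Tendsto (fun H : ℕ => LFreeAux.alf H) Filter.atTop (nhds 0) := by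
      have h2c : Filter.Tendsto (fun H : ℕ => Real.pi / ((H : ℝ) + 1)) Filter.atTop (nhds 0) := by
        have h3c := (tendsto_const_div_atTop_nhds_zero_nat Real.pi).comp
          (Filter.tendsto_add_atTop_nat 1)
        have h4c : ((fun H : ℕ => Real.pi / (H : ℝ)) ∘ (fun H : ℕ => H + 1))
            = fun H : ℕ => Real.pi / ((H : ℝ) + 1) := by
          funext H
          simp [Function.comp]
        rwa [h4c] at h3c
      exact h2c.congr (fun H => by rw [LFreeAux.alf])
    have h2c : Filter.Tendsto (fun H : ℕ => Real.cos (LFreeAux.alf H)) Filter.atTop (nhds 1) := by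
      have := (Real.continuous_cos.tendsto 0).comp h1c
      simpa [Function.comp_def] using this
    have h3c : Filter.Tendsto (fun H : ℕ => 2 * ((n:ℝ) - 1) * (1 + Real.cos (LFreeAux.alf H)))
        Filter.atTop (nhds (2 * ((n:ℝ) - 1) * (1 + 1))) :=
      (h2c.const_add 1).const_mul _
    have h4c : 2 * ((n:ℝ) - 1) * (1 + 1) = 4 * ((n:ℝ) - 1) := by ring
    rw [h4c] at h3c
    exact h3c.congr (fun H => by rw [LFreeAux.mue])
  have hge : 4 * ((n:ℝ) - 1) ≤ N := by
    by_contra hcon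
    push_neg at hcon
    have hev : ∀ᶠ H : ℕ in Filter.atTop, N < LFreeAux.mue n H :=
      hlim.eventually (eventually_gt_nhds hcon)
    obtain ⟨H, hNlt, hH1⟩ := (hev.and (Filter.eventually_ge_atTop 1)).exists
    exact absurd (hlow H hH1) (not_le.mpr hNlt)
  -- N ≤ 4(n-1)
  have hle : N ≤ 4 * ((n:ℝ) - 1) := by
    by_contra hcon
    push_neg at hcon
    set Q := 4 * ((n:ℝ) - 1) with hQ
    have hQ4 : (4:ℝ) ≤ Q := by rw [hQ]; nlinarith
    set P := (N + Q)/2 with hP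
    have hPQ : Q < P := by rw [hP]; linarith
    have hPN : P < N := by rw [hP]; linarith
    have hP0 : (0:ℝ) < P := by linarith
    set ε := N - P with hε
    have hε0 : (0:ℝ) < ε := by rw [hε]; linarith
    set g0 : ℝ → ℝ := fun r => max (|r| - P) 0 / ε with hg0def
    have hg0cont : Continuous g0 := by
      rw [hg0def]
      exact ((continuous_abs.sub continuous_const).max continuous_const).div_const ε
    set c := cfc g0 b with hc
    have hcsa : IsSelfAdjoint c := cfc_predicate _ b
    obtain ⟨r0, hr0mem, hr0⟩ := LFree.exists_spectrum_abs_norm b hbsa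
    have hg0r0 : g0 r0 = 1 := by
      rw [hg0def]
      simp only
      rw [hr0, ← hN]
      rw [show max (N - P) 0 = ε from by rw [hε]; exact max_eq_left (by linarith)]
      exact div_self hε0.ne'

    have hcne : c ≠ 0 := by
      intro hcz
      have hmap := cfc_map_spectrum (R := ℝ) g0 b hbsa hg0cont.continuousOn
      have h1m : (1:ℝ) ∈ spectrum ℝ c := by
        rw [hc, hmap]
        exact ⟨r0, hr0mem, hg0r0⟩
      rw [hcz, spectrum.zero_eq] at h1m
      simp at h1m
    set δ := τ (star c * c) with hδ
    have hδ0 : 0 ≤ δ := hpos c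
    have hδne : δ ≠ 0 := fun h => hcne (hτf c h)
    obtain ⟨hδre0, hδim⟩ : 0 ≤ δ.re ∧ δ.im = 0 := by
      have := Complex.le_def.mp hδ0
      simpa [eq_comm] using this
    have hδre : 0 < δ.re := by
      rcases lt_or_eq_of_le hδre0 with h | h
      · exact h
      · exact absurd (Complex.ext h.symm hδim) hδne
    have hlow2 : ∀ m : ℕ, P ^ (2*m) * δ.re ≤ ((LFreeAux.fcnt n (2*m) 0 : ℕ) : ℝ) := by
      intro m
      have hcont2 : Continuous (fun r : ℝ => r ^ (2*m) - P^(2*m) * (g0 r)^2) :=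
        (continuous_pow _).sub (continuous_const.mul (hg0cont.pow 2))
      have hh : ∀ r ∈ spectrum ℝ b, 0 ≤ r ^ (2*m) - P^(2*m) * (g0 r)^2 := by
        intro r hr
        have habs := hspec r hr
        have hrpow : (0:ℝ) ≤ r ^ (2*m) := (even_two_mul m).pow_nonneg r
        by_cases hcase : |r| ≤ P
        · have hz : g0 r = 0 := by
            rw [hg0def]
            simp only
            rw [max_eq_right (by linarith), zero_div]
          rw [hz]
          simpa using hrpow
        · push_neg at hcase
          have hg0n : (0:ℝ) ≤ g0 r := by
            rw [hg0def]
            positivity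
          have hg1 : g0 r ≤ 1 := by
            rw [hg0def]
            simp only
            rw [div_le_one hε0, max_le_iff]
            constructor
            · rw [hε]; linarith
            · linarith
          have h2 : P^(2*m) * (g0 r)^2 ≤ P^(2*m) := by
            have hp : (0:ℝ) ≤ P ^ (2*m) := by positivity
            have hsq : (g0 r)^2 ≤ 1 := by nlinarith
            have hmul := mul_le_mul_of_nonneg_left hsq hp
            linarith
          have h3 : P^(2*m) ≤ r^(2*m) := by
            rw [← (even_two_mul m).pow_abs r]
            exact pow_le_pow_left₀ hP0.le hcase.le _
          linarith
      have h4 := tnn _ hcont2 hh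
      have h5 : cfc (fun r : ℝ => r ^ (2*m) - P^(2*m) * (g0 r)^2) b
          = b ^ (2*m) - (P^(2*m)) • (c * c) := by
        rw [cfc_sub (fun r : ℝ => r ^ (2*m)) (fun r => P^(2*m) * (g0 r)^2) b ((continuous_pow _).continuousOn)
          ((continuous_const.mul (hg0cont.pow 2)).continuousOn)]
        rw [LFree.cfc_pow_eq _ b hbsa]
        congr 1
        have hsm := cfc_smul (R := ℝ) (P^(2*m)) (fun r => (g0 r)^2) b ((hg0cont.pow 2).continuousOn)
        have hpw := cfc_pow (R := ℝ) g0 2 b (hg0cont.continuousOn)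
        calc cfc (fun r : ℝ => P^(2*m) * (g0 r)^2) b
            = cfc (fun r : ℝ => P^(2*m) • ((g0 r)^2)) b := rfl
          _ = P^(2*m) • cfc (fun r : ℝ => (g0 r)^2) b := hsm
          _ = P^(2*m) • ((cfc g0 b)^2) := by rw [hpw]
          _ = P^(2*m) • (c * c) := by rw [sq, hc]
      rw [h5] at h4
      have h6 : τ (b ^ (2*m) - (P^(2*m)) • (c * c))
          = ((LFreeAux.fcnt n (2*m) 0 : ℕ) : ℂ) - ((P^(2*m) : ℝ) : ℂ) * δ := by
        rw [← hτLA, map_sub, hτLA, hτLA, hmom]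
        congr 1
        have hsmc : (P^(2*m) : ℝ) • (c * c) = ((P^(2*m) : ℝ) : ℂ) • (c * c) :=
          (algebraMap_smul ℂ _ _).symm
        rw [hsmc, ← hτLA, map_smul, hτLA]
        rw [hδ, hcsa.star_eq]
        simp
      rw [h6] at h4
      have h7 := (Complex.le_def.mp h4).1
      simp only [Complex.sub_re, Complex.mul_re, Complex.ofReal_re, Complex.ofReal_im,
        Complex.zero_re, Complex.natCast_re, hδim] at h7
      simp at h7
      linarith
    have hubc : ∀ m : ℕ, ((LFreeAux.fcnt n (2*m) 0 : ℕ) : ℝ) ≤ Q ^ (2*m) := by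
      intro m
      have hfl := LFreeAux.fcnt_le hn (2*m) 0
      have h1n : 1 ≤ n := by omega
      calc ((LFreeAux.fcnt n (2*m) 0 : ℕ) : ℝ)
          = ((LFreeAux.fcnt n (2*m) 0 * (n-1)^0 : ℕ) : ℝ) := by norm_num
        _ ≤ (((4*(n-1))^(2*m) : ℕ) : ℝ) := by exact_mod_cast hfl
        _ = Q ^ (2*m) := by
            rw [hQ]
            push_cast [h1n]
            ring
    have hQ0 : (0:ℝ) < Q := by linarith
    have hPQr : 1 < P / Q := (one_lt_div hQ0).mpr hPQ
    obtain ⟨m0, hm0⟩ := pow_unbounded_of_one_lt (1 / δ.re) hPQr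
    have h8 := hlow2 m0
    have h9 := hubc m0
    have h10 : (P/Q)^(2*m0) ≤ 1/δ.re := by
      rw [div_pow, div_le_div_iff₀ (by positivity) hδre]
      calc P^(2*m0) * δ.re ≤ ((LFreeAux.fcnt n (2*m0) 0 : ℕ) : ℝ) := h8
        _ ≤ Q^(2*m0) := h9
        _ = 1 * Q^(2*m0) := by ring
    have h11 : (P/Q)^m0 ≤ (P/Q)^(2*m0) := pow_le_pow_right₀ hPQr.le (by omega)
    linarith
  -- conclusion
  have hNval : N = 4 * ((n:ℝ) - 1) := le_antisymm hle hge
  have hxnorm : ‖x‖ * ‖x‖ = 4 * ((n:ℝ) - 1) := by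
    have h2 : ‖x‖ * ‖x‖ = N := by
      rw [hN, hbdef, CStarRing.norm_self_mul_star]
    rw [h2, hNval]
  have hnn : (0:ℝ) ≤ (n:ℝ) - 1 := by linarith
  have hfin : ‖x‖ = 2 * Real.sqrt ((n:ℝ) - 1) := by
    have h2 : ‖x‖^2 = (2 * Real.sqrt ((n:ℝ)-1))^2 := by
      rw [sq, hxnorm, mul_pow, Real.sq_sqrt hnn]
      ring
    have h3 : ‖x‖ = Real.sqrt (‖x‖^2) := (Real.sqrt_sq (norm_nonneg x)).symm
    rw [h3, h2, Real.sqrt_sq (by positivity)]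
  exact hfin
end

section
/- Let M be a unital C*-algebra with a tracial state τ, let n ≥ 2, and let u₁, …, uₙ ∈ M be unitaries. Then the family (u₁, …, uₙ) is L-free with respect to τ if and only if the n−1 unitaries u₁* u₂, u₁* u₃, …, u₁* uₙ are freely independent Haar unitaries with respect to τ. -/
open scoped BigOperators ComplexOrder

namespace LFreeAux

variable {A : Type*} [Ring A] [StarRing A] {n : ℕ}

lemma chain'_iff_get_old {α : Type*} {R : α → α → Prop} {l : List α} :
    List.Chain' R l ↔ ∀ (i : ℕ) (h : i < l.length - 1),
      R (l.get ⟨i, by omega⟩) (l.get ⟨i + 1, by omega⟩) := by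
  simp only [List.Chain', List.isChain_iff_getElem, List.get_eq_getElem]
  constructor
  · intro h i hi; exact h i (by omega)
  · intro h i hi; exact h i (by omega)

lemma get_map_old {α β : Type*} (f : α → β) (l : List α) (i : Fin (l.map f).length) :
    (l.map f).get i = f (l.get ⟨i, by simpa using i.2⟩) := by
  simp

def wprod (x : Fin n → A) (l : List (Fin n × Bool)) : A :=
  (l.map fun p => if p.2 then x p.1 else star (x p.1)).prod

def GoodL (l : List (Fin n × Bool)) : Prop :=
  l.Chain' fun p q => q.2 = !p.2 ∧ q.1 ≠ p.1

lemma wprod_nil (x : Fin n → A) : wprod x ([] : List (Fin n × Bool)) = 1 := rfl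

lemma wprod_cons (x : Fin n → A) (p : Fin n × Bool) (l : List (Fin n × Bool)) :
    wprod x (p :: l) = (if p.2 then x p.1 else star (x p.1)) * wprod x l := by
  simp [wprod]

lemma wprod_append (x : Fin n → A) (l1 l2 : List (Fin n × Bool)) :
    wprod x (l1 ++ l2) = wprod x l1 * wprod x l2 := by
  simp [wprod]

lemma head?_append_ne {α : Type*} (xs ys : List α) (h : xs ≠ []) :
    (xs ++ ys).head? = xs.head? := by
  cases xs with
  | nil => exact absurd rfl h
  | cons a t => rfl

def blockL (c d : Fin n) : ℕ → List (Fin n × Bool)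
  | 0 => []
  | m + 1 => (c, false) :: (d, true) :: blockL c d m

lemma blockL_succ_append (c d : Fin n) (m : ℕ) :
    blockL c d (m + 1) = blockL c d m ++ [(c, false), (d, true)] := by
  induction m with
  | zero => rfl
  | succ m ih =>
    show (c,false)::(d,true)::blockL c d (m+1) = ((c,false)::(d,true)::blockL c d m) ++ _
    rw [ih]
    simp

lemma wprod_blockL (x : Fin n → A) (c d : Fin n) (m : ℕ) :
    wprod x (blockL c d m) = (star (x c) * x d) ^ m := by
  induction m with
  | zero => simp [blockL, wprod]
  | succ m ih =>
    rw [blockL, wprod_cons, wprod_cons, ih, pow_succ']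
    simp [mul_assoc]

lemma goodL_blockL_aux (c d : Fin n) (hdc : d ≠ c) (hcd : c ≠ d) (m : ℕ) :
    GoodL (blockL c d m) ∧
      List.Chain' (fun p q => q.2 = !p.2 ∧ q.1 ≠ p.1) ((d, true) :: blockL c d m) := by
  induction m with
  | zero => exact ⟨List.isChain_nil, List.isChain_singleton _⟩
  | succ m ih =>
    rw [blockL]
    refine ⟨List.isChain_cons_cons.mpr ⟨⟨rfl, hdc⟩, ih.2⟩, ?_⟩
    exact List.isChain_cons_cons.mpr ⟨⟨rfl, hcd⟩, List.isChain_cons_cons.mpr ⟨⟨rfl, hdc⟩, ih.2⟩⟩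

lemma goodL_blockL (c d : Fin n) (hdc : d ≠ c) (hcd : c ≠ d) (m : ℕ) :
    GoodL (blockL c d m) := (goodL_blockL_aux c d hdc hcd m).1

lemma blockL_head (c d : Fin n) (m : ℕ) (hm : m ≠ 0) :
    (blockL c d m).head? = some (c, false) := by
  cases m with
  | zero => omega
  | succ m => rfl

/-- Sign pattern: in a GoodL list starting with sign `false`,
the sign at position `t` is `decide (t % 2 = 1)`. -/
lemma goodL_sign (l : List (Fin n × Bool)) (hg : GoodL l)
    (h0 : l.head?.map Prod.snd = some false) :
    ∀ t (ht : t < l.length), (l.get ⟨t, ht⟩).2 = decide (t % 2 = 1) := by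
  intro t
  induction t with
  | zero =>
    intro ht
    cases l with
    | nil => simp at ht
    | cons p t =>
      simp only [List.head?, Option.map_some, Option.some.injEq] at h0
      simpa using h0
  | succ t ih =>
    intro ht
    have h1 : t < l.length - 1 := by omega
    have hrel := LFreeAux.chain'_iff_get_old.mp hg t h1
    have ih' := ih (by omega)
    rcases Nat.mod_two_eq_zero_or_one t with h | h
    · have h2 : (t + 1) % 2 = 1 := by omega
      rw [hrel.1, ih']
      simp [h, h2]
    · have h2 : (t + 1) % 2 = 0 := by omega
      rw [hrel.1, ih']
      simp [h, h2]

section ZpowU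

lemma zpowU_pos (y : A) (e : ℤ) (he : 0 < e) : zpowU y e = y ^ e.toNat := if_pos he.le
lemma zpowU_neg (y : A) (e : ℤ) (he : e < 0) : zpowU y e = star y ^ (-e).toNat :=
  if_neg (by omega)
lemma zpowU_one (y : A) : zpowU y 1 = y := by rw [zpowU_pos y 1 one_pos]; simp
lemma zpowU_neg_one (y : A) : zpowU y (-1) = star y := by
  rw [zpowU_neg y (-1) (by norm_num)]; simp
lemma zpowU_add_one_of_pos (y : A) (e : ℤ) (he : 0 < e) :
    zpowU y (1 + e) = y * zpowU y e := by
  rw [zpowU_pos y _ (by omega), zpowU_pos y e he]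
  have h : (1 + e).toNat = e.toNat + 1 := by omega
  rw [h, pow_succ']
lemma zpowU_sub_one_of_neg (y : A) (e : ℤ) (he : e < 0) :
    zpowU y (-1 + e) = star y * zpowU y e := by
  rw [zpowU_neg y _ (by omega), zpowU_neg y e he]
  have h : (-(-1 + e)).toNat = (-e).toNat + 1 := by omega
  rw [h, pow_succ']

end ZpowU

def sgn (s : Bool) : ℤ := if s then 1 else -1

lemma sgn_ne_zero (s : Bool) : sgn s ≠ 0 := by cases s <;> simp [sgn]

def groupW (z0 : Fin n) : List (Fin n × Bool) → List (Fin n × ℤ)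
  | [] => []
  | (a, s) :: t =>
    if a = z0 then groupW z0 t
    else match groupW z0 t with
      | [] => [(a, sgn s)]
      | (b, e) :: r => if b = a then (a, sgn s + e) :: r else (a, sgn s) :: (b, e) :: r

def prodB (x : Fin n → A) (z0 : Fin n) (bs : List (Fin n × ℤ)) : A :=
  (bs.map fun p => zpowU (star (x z0) * x p.1) p.2).prod

lemma prodB_cons (x : Fin n → A) (z0 : Fin n) (p : Fin n × ℤ) (bs : List (Fin n × ℤ)) :
    prodB x z0 (p :: bs) = zpowU (star (x z0) * x p.1) p.2 * prodB x z0 bs := by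
  simp [prodB]

lemma prodB_append (x : Fin n → A) (z0 : Fin n) (bs bs' : List (Fin n × ℤ)) :
    prodB x z0 (bs ++ bs') = prodB x z0 bs * prodB x z0 bs' := by
  simp [prodB]

lemma groupW_eq_nil (z0 : Fin n) :
    ∀ ws : List (Fin n × Bool), groupW z0 ws = [] → ∀ p ∈ ws, p.1 = z0 := by
  intro ws
  induction ws with
  | nil => intro _ p hp; cases hp
  | cons q t ih =>
    obtain ⟨a, s⟩ := q
    intro h p hp
    by_cases ha : a = z0
    · rw [show groupW z0 ((a,s)::t) = groupW z0 t by simp [groupW, ha]] at h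
      rcases List.mem_cons.mp hp with hp | hp
      · rw [hp]; exact ha
      · exact ih h p hp
    · exfalso
      rcases hgt : groupW z0 t with _ | ⟨⟨b, e⟩, r⟩
      · rw [show groupW z0 ((a,s)::t) = [(a, sgn s)] by simp [groupW, ha, hgt]] at h
        cases h
      · by_cases hba : b = a
        · rw [show groupW z0 ((a,s)::t) = (a, sgn s + e) :: r by
            simp [groupW, ha, hgt, hba]] at h
          cases h
        · rw [show groupW z0 ((a,s)::t) = (a, sgn s) :: (b,e) :: r by
            simp [groupW, ha, hgt, hba]] at h
          cases h

lemma wprod_w_one (x : Fin n → A) (z0 : Fin n) (hz1 : star (x z0) * x z0 = 1)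
    (l : List (Fin n × Bool)) (h : ∀ p ∈ l, p.1 = z0) :
    wprod (fun a => star (x z0) * x a) l = 1 := by
  induction l with
  | nil => rfl
  | cons p t ih =>
    rw [wprod_cons, ih (fun q hq => h q (List.mem_cons_of_mem _ hq))]
    have hp : p.1 = z0 := h p (List.mem_cons_self)
    cases hs : p.2 <;> simp [hp, hz1]

/-- Core grouping lemma for direction 2. -/
lemma grp (x : Fin n → A) (z0 : Fin n)
    (hz1 : star (x z0) * x z0 = 1) :
    ∀ ws : List (Fin n × Bool), GoodL ws →
      (∀ q ∈ groupW z0 ws, q.1 ≠ z0 ∧ q.2 ≠ 0) ∧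
      (groupW z0 ws).Chain' (fun p q => q.1 ≠ p.1) ∧
      prodB x z0 (groupW z0 ws) = wprod (fun a => star (x z0) * x a) ws ∧
      (∀ a s t, ws = (a, s) :: t → a ≠ z0 →
        ∃ e r, groupW z0 ws = (a, e) :: r ∧ (0 < e ↔ s = true)) := by
  intro ws
  generalize hlen : ws.length = N
  induction N using Nat.strong_induction_on generalizing ws with
  | _ N ih =>
  intro hg
  cases ws with
  | nil =>
    refine ⟨by simp [groupW], by simp [groupW, List.Chain'], by simp [groupW, prodB, wprod], ?_⟩
    intro a s t h; cases h
  | cons q t =>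
    obtain ⟨a, s⟩ := q
    have hgt : GoodL t := hg.tail
    have iht := ih t.length (by simp at hlen; omega) t rfl hgt
    by_cases ha : a = z0
    · have hgw : groupW z0 ((a,s)::t) = groupW z0 t := by simp [groupW, ha]
      refine ⟨hgw ▸ iht.1, hgw ▸ iht.2.1, ?_, ?_⟩
      · rw [hgw, iht.2.2.1, wprod_cons]
        cases s <;> simp [ha, hz1]
      · intro a' s' t' heq ha'
        rw [List.cons.injEq, Prod.mk.injEq] at heq
        exact absurd (heq.1.1.symm ▸ ha) ha'
    · rcases hgt2 : groupW z0 t with _ | ⟨⟨b, e⟩, r⟩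
      · -- groupW t = []
        have hgw : groupW z0 ((a,s)::t) = [(a, sgn s)] := by simp [groupW, ha, hgt2]
        have hwt : wprod (fun a => star (x z0) * x a) t = 1 :=
          wprod_w_one x z0 hz1 t (groupW_eq_nil z0 t hgt2)
        refine ⟨?_, ?_, ?_, ?_⟩
        · rw [hgw]; intro q hq
          rcases List.mem_cons.mp hq with hq | hq
          · rw [hq]; exact ⟨ha, sgn_ne_zero s⟩
          · exact absurd hq List.not_mem_nil
        · rw [hgw]; exact List.isChain_singleton _
        · rw [hgw, prodB_cons, wprod_cons, hwt]
          cases s <;> simp [prodB, sgn, zpowU_one, zpowU_neg_one, star_mul]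
        · intro a' s' t' heq ha'
          rw [List.cons.injEq, Prod.mk.injEq] at heq
          obtain ⟨⟨h1, h2⟩, h3⟩ := heq
          subst h1; subst h2
          refine ⟨sgn s, [], hgw, ?_⟩
          cases s <;> simp [sgn]
      · -- groupW t = (b,e)::r
        have hmem_be : b ≠ z0 ∧ e ≠ 0 := iht.1 (b, e) (hgt2 ▸ List.mem_cons_self)
        by_cases hba : b = a
        · -- merge case; first establish the sign compatibility
          have hsign : 0 < e ↔ s = true := by
            cases t with
            | nil => simp [groupW] at hgt2
            | cons q2 t' =>
              obtain ⟨c, s'⟩ := q2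
              have hcs : s' = !s ∧ c ≠ a := by
                have h := (List.isChain_cons_cons.mp hg).1; exact ⟨h.1, h.2⟩
              by_cases hc : c = z0
              · cases t' with
                | nil => simp [groupW, hc] at hgt2
                | cons q3 t'' =>
                  obtain ⟨c2, s2⟩ := q3
                  have h2 : s2 = !s' ∧ c2 ≠ c := by
                    have h := (List.isChain_cons_cons.mp hg.tail).1; exact ⟨h.1, h.2⟩
                  have hs2 : s2 = s := by rw [h2.1, hcs.1, Bool.not_not]
                  have hc2 : c2 ≠ z0 := hc ▸ h2.2
                  have hgwt : groupW z0 ((c,s')::(c2,s2)::t'') = groupW z0 ((c2,s2)::t'') := by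
                    simp [groupW, hc]
                  have iht2 := ih ((c2,s2)::t'').length
                    (by simp at hlen ⊢; omega) _ rfl (hg.tail.tail)
                  obtain ⟨e2, r2, hgw2, hsgn2⟩ := iht2.2.2.2 c2 s2 t'' rfl hc2
                  have : (b, e) :: r = (c2, e2) :: r2 := by
                    rw [← hgt2, hgwt, hgw2]
                  rw [List.cons.injEq, Prod.mk.injEq] at this
                  obtain ⟨⟨hb1, he1⟩, hr1⟩ := this
                  subst he1
                  rw [hsgn2, hs2]
              · -- c ≠ z0 : head of groupW t is (c, ·) with c ≠ a, contradicting b = a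
                obtain ⟨e', r', hgw', _⟩ := iht.2.2.2 c s' t' rfl hc
                rw [hgw'] at hgt2
                rw [List.cons.injEq, Prod.mk.injEq] at hgt2
                exact absurd (hgt2.1.1.trans hba) hcs.2
          have hcase : (s = true ∧ 0 < e) ∨ (s = false ∧ e < 0) := by
            cases s
            · right
              refine ⟨rfl, ?_⟩
              rcases lt_trichotomy e 0 with h | h | h
              · exact h
              · exact absurd h hmem_be.2
              · exact absurd (hsign.mp h) (by simp)
            · exact Or.inl ⟨rfl, hsign.mpr rfl⟩
          have hgw : groupW z0 ((a,s)::t) = (a, sgn s + e) :: r := by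
            simp [groupW, ha, hgt2, hba]
          have hnz : sgn s + e ≠ 0 := by
            rcases hcase with ⟨hs, he⟩ | ⟨hs, he⟩ <;> subst hs <;> simp [sgn] <;> omega
          refine ⟨?_, ?_, ?_, ?_⟩
          · rw [hgw]; intro q hq
            rcases List.mem_cons.mp hq with hq | hq
            · rw [hq]; exact ⟨ha, hnz⟩
            · exact iht.1 q (hgt2 ▸ List.mem_cons_of_mem _ hq)
          · rw [hgw]
            have hch : (groupW z0 t).Chain' (fun p q => q.1 ≠ p.1) := iht.2.1
            rw [hgt2] at hch
            simp only [List.Chain', List.isChain_cons] at hch ⊢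
            refine ⟨fun y hy => ?_, hch.2⟩
            rw [← hba]
            exact hch.1 y hy
          · rw [hgw, prodB_cons, wprod_cons, ← iht.2.2.1, hgt2, prodB_cons, hba]
            dsimp only
            rcases hcase with ⟨hs, he⟩ | ⟨hs, he⟩
            · subst hs
              rw [show sgn true = 1 from rfl, zpowU_add_one_of_pos _ e he]
              simp [mul_assoc]
            · subst hs
              rw [show sgn false = -1 from rfl, zpowU_sub_one_of_neg _ e he]
              simp [mul_assoc]
          · intro a' s' t' heq ha'
            rw [List.cons.injEq, Prod.mk.injEq] at heq
            obtain ⟨⟨h1, h2⟩, h3⟩ := heq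
            subst h1; subst h2
            refine ⟨sgn s + e, r, hgw, ?_⟩
            rcases hcase with ⟨hs, he⟩ | ⟨hs, he⟩ <;> subst hs <;> simp [sgn] <;> omega
        · -- no merge
          have hgw : groupW z0 ((a,s)::t) = (a, sgn s) :: (b,e) :: r := by
            simp [groupW, ha, hgt2, hba]
          refine ⟨?_, ?_, ?_, ?_⟩
          · rw [hgw]; intro q hq
            rcases List.mem_cons.mp hq with hq | hq
            · rw [hq]; exact ⟨ha, sgn_ne_zero s⟩
            · exact iht.1 q (hgt2 ▸ hq)
          · rw [hgw]
            refine List.isChain_cons_cons.mpr ⟨hba, ?_⟩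
            rw [← hgt2]; exact iht.2.1
          · rw [hgw, prodB_cons, wprod_cons, ← iht.2.2.1, hgt2]
            cases s <;> simp [sgn, zpowU_one, zpowU_neg_one]
          · intro a' s' t' heq ha'
            rw [List.cons.injEq, Prod.mk.injEq] at heq
            obtain ⟨⟨h1, h2⟩, h3⟩ := heq
            subst h1; subst h2
            refine ⟨sgn s, (b,e)::r, hgw, ?_⟩
            cases s <;> simp [sgn]

def hh (x : Fin n → A) (z0 : Fin n) (l : List (Fin n × Bool)) : A :=
  if l.head?.map Prod.snd = some true then star (x z0) else 1

def tl (x : Fin n → A) (z0 : Fin n) (l : List (Fin n × Bool)) : A :=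
  if l.getLast?.map Prod.snd = some false then x z0 else 1

/-- Conversion between `u`-words and `w`-words (`w a = (u z0)* u a`) on sign-alternating lists. -/
lemma wprod_w_eq (x : Fin n → A) (z0 : Fin n) (hz2 : x z0 * star (x z0) = 1)
    (l : List (Fin n × Bool)) (hc : l.Chain' fun p q => q.2 = !p.2) :
    wprod (fun a => star (x z0) * x a) l = hh x z0 l * wprod x l * tl x z0 l := by
  induction l with
  | nil => simp [hh, tl, wprod]
  | cons p l ih =>
    cases l with
    | nil =>
      obtain ⟨a, s⟩ := p
      cases s with
      | false =>
        simp [hh, tl, wprod, star_mul]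
      | true =>
        simp [hh, tl, wprod, mul_assoc]
    | cons q l' =>
      have hpq : q.2 = !p.2 := (List.isChain_cons_cons.mp hc).1
      have ih' := ih (List.isChain_cons_cons.mp hc).2
      rw [wprod_cons _ p, ih']
      obtain ⟨a, s⟩ := p
      have htl : tl x z0 ((a, s) :: q :: l') = tl x z0 (q :: l') := by
        simp [tl, List.getLast?_cons_cons]
      rw [htl, wprod_cons x (a, s)]
      cases s with
      | false =>
        have hq2 : q.2 = true := by simp [hpq]
        have hhh : hh x z0 ((a, false) :: q :: l') = 1 := by simp [hh]
        have hhh' : hh x z0 (q :: l') = star (x z0) := by simp [hh, hq2]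
        rw [hhh, hhh']
        simp only [if_neg (Bool.false_ne_true)]
        rw [star_mul, star_star]
        simp only [mul_assoc, one_mul]
        rw [← mul_assoc (x z0) (star (x z0)), hz2, one_mul]
      | true =>
        have hq2 : q.2 = false := by simp [hpq]
        have hhh : hh x z0 ((a, true) :: q :: l') = star (x z0) := by simp [hh]
        have hhh' : hh x z0 (q :: l') = 1 := by simp [hh, hq2]
        rw [hhh, hhh']
        simp [mul_assoc]

lemma block_data (x : Fin n → A) (z0 : Fin n) (p : Fin n × ℤ)
    (hp1 : p.1 ≠ z0) (hp2 : p.2 ≠ 0) :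
    ∃ (c2 d2 : Fin n) (m' : ℕ),
      c2 ≠ d2 ∧
      zpowU (star (x z0) * x p.1) p.2 = wprod x (blockL c2 d2 (m' + 1)) ∧
      ((0 < p.2 ∧ c2 = z0 ∧ d2 = p.1) ∨ (p.2 < 0 ∧ c2 = p.1 ∧ d2 = z0)) := by
  rcases lt_trichotomy p.2 0 with hsgn | hsgn | hsgn
  · refine ⟨p.1, z0, (-p.2).toNat - 1, hp1, ?_, Or.inr ⟨hsgn, rfl, rfl⟩⟩
    rw [zpowU_neg _ _ hsgn, wprod_blockL, star_mul, star_star]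
    congr 1
    omega
  · exact absurd hsgn hp2
  · refine ⟨z0, p.1, p.2.toNat - 1, Ne.symm hp1, ?_, Or.inl ⟨hsgn, rfl, rfl⟩⟩
    rw [zpowU_pos _ _ hsgn, wprod_blockL]
    congr 1
    omega

/-- Direction 1 invariant: a nonempty product of blocks equals an alternating word
of the shape `l₀ ++ [(c,false),(d,true)]`. -/
lemma D1 (x : Fin n → A) (z0 : Fin n) (hz2 : x z0 * star (x z0) = 1) :
    ∀ bl : List (Fin n × ℤ), bl ≠ [] → (∀ q ∈ bl, q.1 ≠ z0 ∧ q.2 ≠ 0) →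
      bl.Chain' (fun p q => q.1 ≠ p.1) →
      ∃ (l₀ : List (Fin n × Bool)) (c d : Fin n) (q' : Fin n × ℤ),
        bl.getLast? = some q' ∧
        GoodL (l₀ ++ [(c, false), (d, true)]) ∧
        (l₀ ++ [(c, false), (d, true)]).head?.map Prod.snd = some false ∧
        prodB x z0 bl = wprod x (l₀ ++ [(c, false), (d, true)]) ∧
        ((0 < q'.2 ∧ d = q'.1) ∨ (q'.2 < 0 ∧ d = z0 ∧ c = q'.1)) := by
  intro bl
  induction bl using List.reverseRecOn with
  | nil => intro h; exact absurd rfl h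
  | append_singleton bs p ih =>
    intro _ hmem hch
    have hp : p.1 ≠ z0 ∧ p.2 ≠ 0 := hmem p (by simp)
    obtain ⟨c2, d2, m', hcd2, hblock, hsig⟩ := block_data x z0 p hp.1 hp.2
    have hlast : (bs ++ [p]).getLast? = some p := List.getLast?_concat
    have hgB : GoodL (blockL c2 d2 (m' + 1)) :=
      goodL_blockL c2 d2 (Ne.symm hcd2) hcd2 (m' + 1)
    cases bs with
    | nil =>
      refine ⟨blockL c2 d2 m', c2, d2, p, hlast, ?_, ?_, ?_, ?_⟩
      · rw [← blockL_succ_append]; exact hgB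
      · rw [← blockL_succ_append, blockL_head c2 d2 (m'+1) (by omega)]; rfl
      · rw [← blockL_succ_append]
        simp only [List.nil_append]
        rw [prodB_cons]
        simp [prodB, hblock]
      · rcases hsig with ⟨h1, h2, h3⟩ | ⟨h1, h2, h3⟩
        · exact Or.inl ⟨h1, h3⟩
        · exact Or.inr ⟨h1, h3, h2⟩
    | cons b0 bs' =>
      have hbs_ne : (b0 :: bs') ≠ [] := List.cons_ne_nil _ _
      have hchsplit := List.isChain_append.mp hch
      obtain ⟨l₀, c, d, q', hql, hgfl, hhead, hprod, hsig'⟩ :=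
        ih hbs_ne (fun q hq => hmem q (List.mem_append_left _ hq)) hchsplit.1
      have hq'mem : q' ∈ (b0 :: bs') := by
        obtain ⟨hx, heq⟩ := List.mem_getLast?_eq_getLast (Option.mem_def.mpr hql)
        rw [heq]; exact List.getLast_mem hx
      have hq'z : q'.1 ≠ z0 := (hmem q' (List.mem_append_left _ hq'mem)).1
      have hjun : p.1 ≠ q'.1 := by
        have := hchsplit.2.2 q' (by simp [hql]) p (by simp)
        exact this
      have hfl_eq : l₀ ++ [(c, false), (d, true)] = (l₀ ++ [(c, false)]) ++ [(d, true)] := by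
        simp
      have hfl_ne : l₀ ++ [(c, false), (d, true)] ≠ [] := by simp
      have hfl_last : (l₀ ++ [(c, false), (d, true)]).getLast? = some (d, true) := by
        rw [hfl_eq, List.getLast?_concat]
      -- plain append construction, works whenever c2 ≠ d
      have plain : c2 ≠ d →
          ∃ (l₀' : List (Fin n × Bool)) (c' d' : Fin n) (q'' : Fin n × ℤ),
            ((b0 :: bs') ++ [p]).getLast? = some q'' ∧
            GoodL (l₀' ++ [(c', false), (d', true)]) ∧
            (l₀' ++ [(c', false), (d', true)]).head?.map Prod.snd = some false ∧
            prodB x z0 ((b0 :: bs') ++ [p]) = wprod x (l₀' ++ [(c', false), (d', true)]) ∧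
            ((0 < q''.2 ∧ d' = q''.1) ∨ (q''.2 < 0 ∧ d' = z0 ∧ c' = q''.1)) := by
        intro hjunc
        have hsh : (l₀ ++ [(c, false), (d, true)]) ++ blockL c2 d2 (m' + 1) =
            ((l₀ ++ [(c, false), (d, true)]) ++ blockL c2 d2 m') ++ [(c2, false), (d2, true)] := by
          rw [blockL_succ_append]
          simp [List.append_assoc]
        refine ⟨(l₀ ++ [(c, false), (d, true)]) ++ blockL c2 d2 m', c2, d2, p, hlast, ?_, ?_, ?_, ?_⟩
        · rw [← hsh]
          refine List.isChain_append.mpr ⟨hgfl, hgB, ?_⟩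
          intro x' hx' y hy
          rw [hfl_last] at hx'
          rw [blockL_head c2 d2 (m'+1) (by omega)] at hy
          simp only [Option.mem_def, Option.some.injEq] at hx' hy
          rw [← hx', ← hy]
          exact ⟨rfl, hjunc⟩
        · rw [← hsh, head?_append_ne _ _ hfl_ne]
          exact hhead
        · rw [← hsh, prodB_append, hprod]
          have hb : prodB x z0 [p] = wprod x (blockL c2 d2 (m' + 1)) := by
            rw [prodB_cons]; simp [prodB, hblock]
          rw [hb, ← wprod_append]
        · rcases hsig with ⟨h1, h2, h3⟩ | ⟨h1, h2, h3⟩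
          · exact Or.inl ⟨h1, h3⟩
          · exact Or.inr ⟨h1, h3, h2⟩
      rcases hsig' with ⟨hqpos, hd⟩ | ⟨hqneg, hdz, hcq⟩
      · -- previous block positive: d = q'.1 ≠ z0 and d ≠ p.1; both cases plain
        rcases hsig with ⟨hppos, hc2, hd2⟩ | ⟨hpneg, hc2, hd2⟩
        · exact plain (by rw [hc2, hd]; exact Ne.symm hq'z)
        · exact plain (by rw [hc2, hd]; exact hjun)
      · rcases hsig with ⟨hppos, hc2, hd2⟩ | ⟨hpneg, hc2, hd2⟩
        · -- CANCEL case: previous block negative, current positive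
          rw [hc2, hd2] at hblock hgB
          rw [hdz] at hgfl hhead hprod hfl_eq hfl_last
          have hcancel : ∀ R : A, x z0 * (star (x z0) * R) = R := fun R => by
            rw [← mul_assoc, hz2, one_mul]
          have h1 : GoodL (l₀ ++ [(c, false)]) :=
            (List.isChain_append.mp (hfl_eq ▸ hgfl)).1
          -- the new list before reshaping
          have hgnew : GoodL ((l₀ ++ [(c, false)]) ++ ((p.1, true) :: blockL z0 p.1 m')) := by
            refine List.isChain_append.mpr ⟨h1, (goodL_blockL_aux z0 p.1 hp.1 (Ne.symm hp.1) m').2, ?_⟩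
            intro x' hx' y hy
            rw [List.getLast?_concat] at hx'
            simp only [List.head?_cons, Option.mem_def, Option.some.injEq] at hx' hy
            rw [← hx', ← hy]
            refine ⟨rfl, ?_⟩
            rw [hcq]
            exact hjun
          have hheadnew : ((l₀ ++ [(c, false)]) ++ ((p.1, true) :: blockL z0 p.1 m')).head?.map
              Prod.snd = some false := by
            rw [head?_append_ne _ _ (by simp : l₀ ++ [(c, false)] ≠ [])]
            rw [hfl_eq, head?_append_ne _ _ (by simp : l₀ ++ [(c, false)] ≠ [])] at hhead
            exact hhead
          have hprodnew : prodB x z0 ((b0 :: bs') ++ [p]) =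
              wprod x ((l₀ ++ [(c, false)]) ++ ((p.1, true) :: blockL z0 p.1 m')) := by
            rw [prodB_append, hprod]
            rw [show prodB x z0 [p] = wprod x (blockL z0 p.1 (m' + 1)) by
              rw [prodB_cons]; simp [prodB, hblock]]
            rw [hfl_eq]
            rw [show blockL z0 p.1 (m' + 1) = (z0, false) :: (p.1, true) :: blockL z0 p.1 m' from rfl]
            simp only [wprod_append, wprod_cons, wprod_nil, mul_assoc, mul_one,
              Bool.false_eq_true, if_true, if_false]
            rw [hcancel]
          -- reshape depending on m'
          cases m' with
          | zero =>
            refine ⟨l₀, c, p.1, p, hlast, ?_, ?_, ?_, Or.inl ⟨hppos, rfl⟩⟩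
            · have : l₀ ++ [(c, false), (p.1, true)] =
                  (l₀ ++ [(c, false)]) ++ ((p.1, true) :: blockL z0 p.1 0) := by
                rw [show blockL z0 p.1 0 = ([] : List (Fin n × Bool)) from rfl]
                simp
              rw [this]; exact hgnew
            · have : l₀ ++ [(c, false), (p.1, true)] =
                  (l₀ ++ [(c, false)]) ++ ((p.1, true) :: blockL z0 p.1 0) := by
                rw [show blockL z0 p.1 0 = ([] : List (Fin n × Bool)) from rfl]
                simp
              rw [this]; exact hheadnew
            · have : l₀ ++ [(c, false), (p.1, true)] =
                  (l₀ ++ [(c, false)]) ++ ((p.1, true) :: blockL z0 p.1 0) := by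
                rw [show blockL z0 p.1 0 = ([] : List (Fin n × Bool)) from rfl]
                simp
              rw [this]; exact hprodnew
          | succ m'' =>
            have hre : (l₀ ++ [(c, false)]) ++ ((p.1, true) :: blockL z0 p.1 (m'' + 1)) =
                ((l₀ ++ [(c, false), (p.1, true)]) ++ blockL z0 p.1 m'') ++ [(z0, false), (p.1, true)] := by
              rw [blockL_succ_append]
              simp
            refine ⟨(l₀ ++ [(c, false), (p.1, true)]) ++ blockL z0 p.1 m'', z0, p.1, p, hlast,
              ?_, ?_, ?_, Or.inl ⟨hppos, rfl⟩⟩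
            · rw [← hre]; exact hgnew
            · rw [← hre]; exact hheadnew
            · rw [← hre]; exact hprodnew
        · -- previous negative, current negative: plain with c2 = p.1 ≠ z0 = d
          exact plain (by rw [hc2, hdz]; exact hp.1)

/-- If `τ` is L-free for `u`, then every nonempty good word starting with a star
and ending without a star has zero trace. -/
lemma tau_wprod_zero (τ : A → ℂ) (u : Fin n → A) (hLF : IsLFree τ u)
    (fl : List (Fin n × Bool)) (hg : GoodL fl) (hne : fl ≠ [])
    (hhead : fl.head?.map Prod.snd = some false)
    (hlast : fl.getLast?.map Prod.snd = some true) :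
    τ (wprod u fl) = 0 := by
  have hlen0 : 0 < fl.length := List.length_pos_iff.mpr hne
  have hsign := goodL_sign fl hg hhead
  have hlast' : (fl.get ⟨fl.length - 1, by omega⟩).2 = true := by
    rw [List.getLast?_eq_getElem?] at hlast
    rw [List.getElem?_eq_getElem (by omega)] at hlast
    simpa using hlast
  have hpar : (fl.length - 1) % 2 = 1 := by
    have h := hsign (fl.length - 1) (by omega)
    rw [hlast'] at h
    simpa using h.symm
  have hk2 : fl.length = 2 * (fl.length / 2) := by omega
  set k := fl.length / 2 with hkdef
  have hk1 : 1 ≤ k := by omega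
  have hlen : ∀ s : Fin (2 * k), (s : ℕ) < fl.length := fun s => by
    have := s.2; omega
  set i : Fin (2 * k) → Fin n := fun s => (fl.get ⟨(s : ℕ), hlen s⟩).1 with hidef
  have hadj : ∀ s t : Fin (2 * k), (t : ℕ) = (s : ℕ) + 1 → i s ≠ i t := by
    intro s t ht h
    have hc := (LFreeAux.chain'_iff_get_old.mp hg (s : ℕ) (by have := hlen t; omega)).2
    apply hc
    rw [hidef] at h
    simp only [ht] at h
    exact h.symm
  have heq : LWordStar u i = wprod u fl := by
    rw [LWordStar, wprod]
    congr 1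
    apply List.ext_get
    · simp [← hk2]
    · intro t h1 h2
      rw [List.get_ofFn, LFreeAux.get_map_old]
      have hs := hsign t (by simpa using h2)
      rw [List.get_eq_getElem] at hs
      rcases Nat.mod_two_eq_zero_or_one t with hp | hp
      · simp [hidef, hp, hs]
      · simp [hidef, hp, hs]
  rw [← heq]
  exact (hLF k hk1 i hadj).2

end LFreeAux

/-- Unitaries `u₁, …, uₙ` form an L-free family if and only if
`u₁* u₂, …, u₁* uₙ` are freely independent Haar unitaries. -/
theorem isLFree_iff_haarFree
    {M : Type*} [NormedRing M] [StarRing M] [CStarRing M] [NormedAlgebra ℂ M]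
    [StarModule ℂ M] [CompleteSpace M]
    (τ : M → ℂ) (hτ : IsTracialState τ)
    (n : ℕ) (hn : 2 ≤ n)
    (u : Fin n → M) (hu : ∀ i, IsUnitary (u i)) :
    IsLFree τ u ↔
      AreHaarFree τ (fun i : Fin (n - 1) =>
        star (u ⟨0, by omega⟩) * u (Fin.cast (by omega : n - 1 + 1 = n) i.succ)) := by
  classical
  obtain ⟨hlin, hone, hpos, htr⟩ := hτ
  have hn0 : 0 < n := by omega
  have hn1 : n - 1 + 1 = n := by omega
  set z0 : Fin n := ⟨0, hn0⟩ with hz0def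
  have hz1 : star (u z0) * u z0 = 1 := (hu z0).1
  have hz2 : u z0 * star (u z0) = 1 := (hu z0).2
  constructor
  · -- L-free implies Haar free
    intro hLF r hr i e he hadj
    set bl : List (Fin n × ℤ) :=
      List.ofFn (fun s : Fin r => ((Fin.cast hn1 (i s).succ : Fin n), e s)) with hbl
    have hbllen : bl.length = r := by simp [hbl]
    have hblne : bl ≠ [] := by
      intro h
      rw [h] at hbllen
      simp at hbllen
      omega
    have hmem : ∀ q ∈ bl, q.1 ≠ z0 ∧ q.2 ≠ 0 := by
      intro q hq
      rw [hbl, List.mem_ofFn] at hq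
      obtain ⟨s, hs⟩ := hq
      rw [← hs]
      refine ⟨?_, he s⟩
      intro hcontra
      have hv := congrArg Fin.val hcontra
      simp [hz0def] at hv
    have hblget : ∀ (t : ℕ) (h1 : t < bl.length) (ht : t < r),
        bl.get ⟨t, h1⟩ = (Fin.cast hn1 (i ⟨t, ht⟩).succ, e ⟨t, ht⟩) := by
      intro t h1 ht
      rw [List.get_eq_getElem]
      simp [hbl]
    have hchain : bl.Chain' (fun p q => q.1 ≠ p.1) := by
      rw [LFreeAux.chain'_iff_get_old]
      intro t ht
      have ht1 : t < r := by omega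
      have ht2 : t + 1 < r := by omega
      rw [hblget t (by omega) ht1, hblget (t + 1) (by omega) ht2]
      intro hcontra
      have hv := congrArg Fin.val hcontra
      simp only [Fin.coe_cast, Fin.val_succ] at hv
      exact hadj ⟨t, ht1⟩ ⟨t + 1, ht2⟩ rfl (Fin.ext (by omega))
    obtain ⟨l₀, c, d, q', hql, hgfl, hhead, hprod, hsig⟩ :=
      LFreeAux.D1 u z0 hz2 bl hblne hmem hchain
    have hconv : (List.ofFn fun s : Fin r =>
        zpowU (star (u z0) * u (Fin.cast hn1 (i s).succ)) (e s)).prod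
        = LFreeAux.prodB u z0 bl := by
      rw [LFreeAux.prodB, hbl, List.map_ofFn]
      rfl
    have hfinal : τ (LFreeAux.wprod u (l₀ ++ [(c, false), (d, true)])) = 0 := by
      refine LFreeAux.tau_wprod_zero τ u hLF _ hgfl (by simp) hhead ?_
      rw [show l₀ ++ [(c, false), (d, true)] = (l₀ ++ [(c, false)]) ++ [(d, true)] by simp,
        List.getLast?_concat]
      rfl
    show τ ((List.ofFn fun s : Fin r =>
        zpowU (star (u z0) * u (Fin.cast hn1 (i s).succ)) (e s)).prod) = 0
    rw [hconv, hprod]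
    exact hfinal
  · -- Haar free implies L-free
    intro hHF
    have hD2 : ∀ L : List (Fin n × Bool), LFreeAux.GoodL L → (∃ p ∈ L, p.1 ≠ z0) →
        τ (LFreeAux.wprod (fun a => star (u z0) * u a) L) = 0 := by
      intro L hGL hex
      obtain ⟨hmemB, hchainB, hprodB, _⟩ := LFreeAux.grp u z0 hz1 L hGL
      set bs := LFreeAux.groupW z0 L with hbs
      have hbs_ne : bs ≠ [] := by
        intro h
        obtain ⟨p, hpL, hpz⟩ := hex
        exact hpz (LFreeAux.groupW_eq_nil z0 L h p hpL)
      have hr : 1 ≤ bs.length := List.length_pos_iff.mpr hbs_ne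
      have hvalne : ∀ s : Fin bs.length, ((bs.get s).1 : ℕ) ≠ 0 := by
        intro s
        intro hc
        exact (hmemB (bs.get s) (bs.get_mem _)).1 (Fin.ext hc)
      set i' : Fin bs.length → Fin (n - 1) := fun s =>
        ⟨((bs.get s).1 : ℕ) - 1, by
          have h2 := hvalne s
          have h3 := (bs.get s).1.2
          omega⟩ with hi'
      set e' : Fin bs.length → ℤ := fun s => (bs.get s).2 with he'
      have hadjB : ∀ s t : Fin bs.length, (t : ℕ) = (s : ℕ) + 1 → i' s ≠ i' t := by
        intro s t hst hc
        have hlt : (s : ℕ) < bs.length - 1 := by have := t.2; omega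
        have hch := LFreeAux.chain'_iff_get_old.mp hchainB (s : ℕ) hlt
        apply hch
        have hv := congrArg Fin.val hc
        simp only [hi'] at hv
        have h1 := hvalne s
        have h2 := hvalne t
        have h3 : ((bs.get s).1 : ℕ) = ((bs.get t).1 : ℕ) := by omega
        have hseq : (⟨(s : ℕ), by omega⟩ : Fin bs.length) = s := Fin.ext rfl
        have hteq : (⟨(s : ℕ) + 1, by omega⟩ : Fin bs.length) = t := Fin.ext hst.symm
        rw [hseq, hteq]
        exact Fin.ext h3.symm
      have happ := hHF bs.length hr i' e'
        (fun s => (hmemB (bs.get s) (bs.get_mem _)).2) hadjB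
      have hlist : (List.ofFn fun s : Fin bs.length =>
          zpowU (star (u z0) * u (Fin.cast hn1 (i' s).succ)) (e' s)) =
          bs.map (fun p => zpowU (star (u z0) * u p.1) p.2) := by
        conv_rhs => rw [← List.ofFn_get bs, List.map_ofFn]
        refine congrArg List.ofFn (funext fun s => ?_)
        have hemb : Fin.cast hn1 (i' s).succ = (bs.get s).1 := by
          have h2 := hvalne s
          apply Fin.ext
          show ((bs.get s).1 : ℕ) - 1 + 1 = ((bs.get s).1 : ℕ)
          omega
        rw [hemb]
        rfl
      rw [← hprodB]
      show τ (LFreeAux.prodB u z0 bs) = 0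
      rw [LFreeAux.prodB, ← hlist]
      exact happ
    intro k hk i hadj
    have hk2 : 2 ≤ 2 * k := by omega
    constructor
    · -- LWord
      set Lw : List (Fin n × Bool) :=
        List.ofFn (fun s : Fin (2 * k) => (i s, decide ((s : ℕ) % 2 = 0))) with hLw
      have hlen : Lw.length = 2 * k := by simp [hLw]
      have hget : ∀ (t : ℕ) (h1 : t < Lw.length) (ht : t < 2 * k),
          Lw.get ⟨t, h1⟩ = (i ⟨t, ht⟩, decide (t % 2 = 0)) := by
        intro t h1 ht
        rw [List.get_eq_getElem]
        simp [hLw]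
      have hG : LFreeAux.GoodL Lw := by
        rw [LFreeAux.GoodL, LFreeAux.chain'_iff_get_old]
        intro t ht
        rw [hget t (by omega), hget (t + 1) (by omega)]
        constructor
        · rcases Nat.mod_two_eq_zero_or_one t with h | h
          · have h2 : (t + 1) % 2 = 1 := by omega
            simp [h, h2]
          · have h2 : (t + 1) % 2 = 0 := by omega
            simp [h, h2]
        · exact (hadj ⟨t, by rw [hlen] at ht; omega⟩ ⟨t + 1, by rw [hlen] at ht; omega⟩ rfl).symm
      have hex : ∃ p ∈ Lw, p.1 ≠ z0 := by
        by_cases h0 : i ⟨0, by omega⟩ = z0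
        · refine ⟨Lw.get ⟨1, by omega⟩, List.get_mem _ _, ?_⟩
          rw [hget 1 (by omega) (by omega)]
          intro hc
          exact hadj ⟨0, by omega⟩ ⟨1, by omega⟩ rfl (h0.trans hc.symm)
        · refine ⟨Lw.get ⟨0, by omega⟩, List.get_mem _ _, ?_⟩
          rw [hget 0 (by omega) (by omega)]
          exact h0
      have heqw : LWord u i = LFreeAux.wprod u Lw := by
        rw [LWord, LFreeAux.wprod]
        congr 1
        apply List.ext_get
        · simp [hLw]
        · intro t h1 h2
          rw [List.get_ofFn, LFreeAux.get_map_old, hget t (by simpa using h2) (by simpa using h1)]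
          rcases Nat.mod_two_eq_zero_or_one t with h | h
          · simp [h]
          · simp [h]
      have hchainSnd : Lw.Chain' (fun p q => q.2 = !p.2) :=
        List.IsChain.imp (fun p q h => h.1) hG
      have hheadw : Lw.head? = some (i ⟨0, by omega⟩, true) := by
        have h0 : 0 < Lw.length := by omega
        rw [List.head?_eq_getElem?, List.getElem?_eq_getElem h0]
        have hg0 := hget 0 h0 (by omega)
        rw [List.get_eq_getElem] at hg0
        rw [hg0]
        rfl
      have hlastw : Lw.getLast? = some (i ⟨2 * k - 1, by omega⟩, false) := by
        have h0 : Lw.length - 1 < Lw.length := by omega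
        rw [List.getLast?_eq_getElem?, List.getElem?_eq_getElem h0]
        have hg0 := hget (Lw.length - 1) h0 (by omega)
        rw [List.get_eq_getElem] at hg0
        rw [hg0]
        have hm' : (2 * k - 1) % 2 = 1 := by omega
        simp [hlen, hm']
      have hW := LFreeAux.wprod_w_eq u z0 hz2 Lw hchainSnd
      have hh1 : LFreeAux.hh u z0 Lw = star (u z0) := by
        rw [LFreeAux.hh, hheadw]
        simp
      have ht1 : LFreeAux.tl u z0 Lw = u z0 := by
        rw [LFreeAux.tl, hlastw]
        simp
      rw [hh1, ht1] at hW
      have h1 : τ (LFreeAux.wprod (fun a => star (u z0) * u a) Lw)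
          = τ (LFreeAux.wprod u Lw) := by
        rw [hW, htr (star (u z0) * LFreeAux.wprod u Lw) (u z0), ← mul_assoc, hz2, one_mul]
      rw [heqw, ← h1]
      exact hD2 Lw hG hex
    · -- LWordStar
      set Lst : List (Fin n × Bool) :=
        List.ofFn (fun s : Fin (2 * k) => (i s, decide ((s : ℕ) % 2 = 1))) with hLst
      have hlen : Lst.length = 2 * k := by simp [hLst]
      have hget : ∀ (t : ℕ) (h1 : t < Lst.length) (ht : t < 2 * k),
          Lst.get ⟨t, h1⟩ = (i ⟨t, ht⟩, decide (t % 2 = 1)) := by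
        intro t h1 ht
        rw [List.get_eq_getElem]
        simp [hLst]
      have hG : LFreeAux.GoodL Lst := by
        rw [LFreeAux.GoodL, LFreeAux.chain'_iff_get_old]
        intro t ht
        rw [hget t (by omega), hget (t + 1) (by omega)]
        constructor
        · rcases Nat.mod_two_eq_zero_or_one t with h | h
          · have h2 : (t + 1) % 2 = 1 := by omega
            simp [h, h2]
          · have h2 : (t + 1) % 2 = 0 := by omega
            simp [h, h2]
        · exact (hadj ⟨t, by rw [hlen] at ht; omega⟩ ⟨t + 1, by rw [hlen] at ht; omega⟩ rfl).symm
      have hex : ∃ p ∈ Lst, p.1 ≠ z0 := by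
        by_cases h0 : i ⟨0, by omega⟩ = z0
        · refine ⟨Lst.get ⟨1, by omega⟩, List.get_mem _ _, ?_⟩
          rw [hget 1 (by omega) (by omega)]
          intro hc
          exact hadj ⟨0, by omega⟩ ⟨1, by omega⟩ rfl (h0.trans hc.symm)
        · refine ⟨Lst.get ⟨0, by omega⟩, List.get_mem _ _, ?_⟩
          rw [hget 0 (by omega) (by omega)]
          exact h0
      have heqst : LWordStar u i = LFreeAux.wprod u Lst := by
        rw [LWordStar, LFreeAux.wprod]
        congr 1
        apply List.ext_get
        · simp [hLst]
        · intro t h1 h2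
          rw [List.get_ofFn, LFreeAux.get_map_old, hget t (by simpa using h2) (by simpa using h1)]
          rcases Nat.mod_two_eq_zero_or_one t with h | h
          · simp [h]
          · simp [h]
      have hchainSnd : Lst.Chain' (fun p q => q.2 = !p.2) :=
        List.IsChain.imp (fun p q h => h.1) hG
      have hheadst : Lst.head? = some (i ⟨0, by omega⟩, false) := by
        have h0 : 0 < Lst.length := by omega
        rw [List.head?_eq_getElem?, List.getElem?_eq_getElem h0]
        have hg0 := hget 0 h0 (by omega)
        rw [List.get_eq_getElem] at hg0
        rw [hg0]
        rfl
      have hlastst : Lst.getLast? = some (i ⟨2 * k - 1, by omega⟩, true) := by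
        have h0 : Lst.length - 1 < Lst.length := by omega
        rw [List.getLast?_eq_getElem?, List.getElem?_eq_getElem h0]
        have hg0 := hget (Lst.length - 1) h0 (by omega)
        rw [List.get_eq_getElem] at hg0
        rw [hg0]
        have hm' : (2 * k - 1) % 2 = 1 := by omega
        simp [hlen, hm']
      have hW := LFreeAux.wprod_w_eq u z0 hz2 Lst hchainSnd
      have hh1 : LFreeAux.hh u z0 Lst = 1 := by
        rw [LFreeAux.hh, hheadst]
        simp
      have ht1 : LFreeAux.tl u z0 Lst = 1 := by
        rw [LFreeAux.tl, hlastst]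
        simp
      rw [hh1, ht1, one_mul, mul_one] at hW
      rw [heqst, ← hW]
      exact hD2 Lst hG hex
end

section
/- Let M be a unital C*-algebra with a tracial state τ, let n ≥ 1, and let v₁, …, vₙ ∈ M be unitaries such that for every m ≥ 1 and all indices i₁, j₁, …, i_m, j_m ∈ {1, …, n}, the complex number τ(v_{i₁} v_{j₁}* v_{i₂} v_{j₂}* ⋯ v_{i_m} v_{j_m}*) has non-negative real part. Then ‖v₁ + v₂ + ⋯ + vₙ‖ ≥ 2√(n−1). -/
open scoped BigOperators ComplexOrder

def myRed {α : Type*} [DecidableEq α] : List α → List α → List α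
  | st, [] => st
  | st, a :: w => myRed (if st.head? = some a then st.tail else a :: st) w

theorem myRed_append {α : Type*} [DecidableEq α] (x y : List α) :
    ∀ st, myRed st (x ++ y) = myRed (myRed st x) y := by
  induction x with
  | nil => intro st; rfl
  | cons a w ih => intro st; simp only [List.cons_append, myRed]; exact ih _

theorem myRed_cons_ne {α : Type*} [DecidableEq α] {t a : α} (h : t ≠ a)
    (st w : List α) : myRed (t :: st) (a :: w) = myRed (a :: t :: st) w := by
  simp [myRed, h]

theorem myRed_cons_eq {α : Type*} [DecidableEq α] (a : α)
    (st w : List α) : myRed (a :: st) (a :: w) = myRed st w := by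
  simp [myRed]

theorem prefix_append_cases {α : Type*} {p x y : List α} (h : p <+: x ++ y) :
    p <+: x ∨ ∃ q, q <+: y ∧ p = x ++ q := by
  obtain ⟨s, hs⟩ := h
  rcases List.append_eq_append_iff.mp hs with ⟨a', ha1, _⟩ | ⟨c', hc1, hc2⟩
  · exact Or.inl ⟨a', ha1.symm⟩
  · exact Or.inr ⟨c', ⟨s, hc2.symm⟩, hc1⟩

def WS (n : ℕ) : ℕ → Fin n → Finset (List (Fin n))
  | 0, _ => {[]}
  | (m+1), t =>
    (Finset.univ.erase t).biUnion fun a =>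
      (Finset.range (m+1)).attach.biUnion fun k =>
        ((WS n k.1 a) ×ˢ (WS n (m - k.1) t)).image fun p => a :: (p.1 ++ a :: p.2)
  termination_by m _ => m
  decreasing_by
  · exact Nat.lt_succ_of_le (Nat.lt_succ_iff.mp (Finset.mem_range.mp k.2))
  · exact Nat.lt_succ_of_le (Nat.sub_le m k.1)

theorem mem_WS_succ {n m : ℕ} {t : Fin n} {w : List (Fin n)} :
    w ∈ WS n (m+1) t ↔ ∃ a, a ≠ t ∧ ∃ k, k ≤ m ∧ ∃ w1 ∈ WS n k a, ∃ w2 ∈ WS n (m-k) t,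
      w = a :: (w1 ++ a :: w2) := by
  rw [WS]
  simp only [Finset.mem_biUnion, Finset.mem_erase, Finset.mem_attach, Finset.mem_image,
    Finset.mem_product, Finset.mem_univ, and_true, true_and]
  constructor
  · rintro ⟨a, hat, ⟨k, hk⟩, ⟨w1, w2⟩, ⟨h1, h2⟩, rfl⟩
    exact ⟨a, hat, k, Nat.lt_succ_iff.mp (Finset.mem_range.mp hk), w1, h1, w2, h2, rfl⟩
  · rintro ⟨a, hat, k, hk, w1, h1, w2, h2, rfl⟩
    exact ⟨a, hat, ⟨k, Finset.mem_range.mpr (Nat.lt_succ_of_le hk)⟩, ⟨w1, w2⟩, ⟨h1, h2⟩, rfl⟩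

theorem mem_WS_zero {n : ℕ} {t : Fin n} {w : List (Fin n)} :
    w ∈ WS n 0 t ↔ w = [] := by rw [WS]; simp

theorem WS_length {n : ℕ} : ∀ (m : ℕ) (t : Fin n) (w : List (Fin n)),
    w ∈ WS n m t → w.length = 2 * m := by
  intro m
  induction m using Nat.strong_induction_on with
  | _ m ih =>
    match m with
    | 0 => intro t w hw; rw [mem_WS_zero.mp hw]; rfl
    | m+1 =>
      intro t w hw
      obtain ⟨a, hat, k, hk, w1, h1, w2, h2, rfl⟩ := mem_WS_succ.mp hw
      have l1 := ih k (Nat.lt_succ_of_le hk) a w1 h1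
      have l2 := ih (m-k) (Nat.lt_succ_of_le (Nat.sub_le m k)) t w2 h2
      simp only [List.length_cons, List.length_append, l1, l2]
      omega

theorem WS_red {n : ℕ} : ∀ (m : ℕ) (t : Fin n) (w : List (Fin n)),
    w ∈ WS n m t → ∀ st : List (Fin n), myRed (t :: st) w = t :: st := by
  intro m
  induction m using Nat.strong_induction_on with
  | _ m ih =>
    match m with
    | 0 => intro t w hw st; rw [mem_WS_zero.mp hw]; rfl
    | m+1 =>
      intro t w hw st
      obtain ⟨a, hat, k, hk, w1, h1, w2, h2, rfl⟩ := mem_WS_succ.mp hw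
      rw [myRed_cons_ne (Ne.symm hat), myRed_append,
        ih k (Nat.lt_succ_of_le hk) a w1 h1 (t :: st), myRed_cons_eq]
      exact ih (m-k) (Nat.lt_succ_of_le (Nat.sub_le m k)) t w2 h2 st

theorem WS_red_prefix {n : ℕ} : ∀ (m : ℕ) (t : Fin n) (w : List (Fin n)),
    w ∈ WS n m t → ∀ p : List (Fin n), p <+: w → ∀ st : List (Fin n),
      ∃ r : List (Fin n), myRed (t :: st) p = r ++ t :: st := by
  intro m
  induction m using Nat.strong_induction_on with
  | _ m ih =>
    match m with
    | 0 =>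
      intro t w hw p hp st
      rw [mem_WS_zero.mp hw] at hp
      rw [List.prefix_nil.mp hp]
      exact ⟨[], rfl⟩
    | m+1 =>
      intro t w hw p hp st
      obtain ⟨a, hat, k, hk, w1, h1, w2, h2, rfl⟩ := mem_WS_succ.mp hw
      rcases p with _ | ⟨b, p⟩
      · exact ⟨[], rfl⟩
      rw [List.cons_prefix_cons] at hp
      obtain ⟨hb, hp⟩ := hp
      subst b
      rw [myRed_cons_ne (Ne.symm hat)]
      rcases prefix_append_cases hp with hp1 | ⟨q, hq, rfl⟩
      · obtain ⟨r, hr⟩ := ih k (Nat.lt_succ_of_le hk) a w1 h1 p hp1 (t :: st)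
        exact ⟨r ++ [a], by rw [hr]; simp⟩
      · rw [myRed_append, WS_red k a w1 h1 (t :: st)]
        rcases q with _ | ⟨c, q⟩
        · exact ⟨[a], rfl⟩
        rw [List.cons_prefix_cons] at hq
        obtain ⟨hc, hq⟩ := hq
        subst c
        rw [myRed_cons_eq]
        exact ih (m-k) (Nat.lt_succ_of_le (Nat.sub_le m k)) t w2 h2 q hq st
theorem WS_head {n m : ℕ} {t a : Fin n} {w : List (Fin n)}
    (hw : w ∈ (Finset.range (m+1)).attach.biUnion fun k =>
        ((WS n k.1 a) ×ˢ (WS n (m - k.1) t)).image fun p => a :: (p.1 ++ a :: p.2)) :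
    w.head? = some a := by
  simp only [Finset.mem_biUnion, Finset.mem_image] at hw
  obtain ⟨k, -, p, -, rfl⟩ := hw
  rfl

/-- two different first-return splits cannot give the same word -/
theorem WS_split_ne {n : ℕ} {a : Fin n} {k k' : ℕ} (hkk : k < k')
    {w1 w2 w1' w2' : List (Fin n)} (h1 : w1 ∈ WS n k a) (h1' : w1' ∈ WS n k' a) :
    w1 ++ a :: w2 ≠ w1' ++ a :: w2' := by
  intro e
  have hl1 : w1.length = 2 * k := WS_length k a w1 h1
  have hl1' : w1'.length = 2 * k' := WS_length k' a w1' h1'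
  have hpre : (w1 ++ [a]) <+: (w1' ++ a :: w2') := by
    rw [← e]; exact ⟨w2, by simp⟩
  have hpre' : (w1 ++ [a]) <+: w1' := by
    rcases prefix_append_cases hpre with h | ⟨q, hq, heq⟩
    · exact h
    · exfalso
      have := congrArg List.length heq
      simp only [List.length_append, List.length_cons, List.length_nil, hl1, hl1'] at this
      omega
  obtain ⟨r, hr⟩ := WS_red_prefix k' a w1' h1' (w1 ++ [a]) hpre' []
  rw [myRed_append, WS_red k a w1 h1 [], myRed_cons_eq] at hr
  exact absurd (congrArg List.length hr) (by simp [myRed])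

theorem WS_card {n : ℕ} : ∀ (m : ℕ) (t : Fin n),
    (n-1)^m * catalan m ≤ (WS n m t).card := by
  intro m
  induction m using Nat.strong_induction_on with
  | _ m ih =>
    match m with
    | 0 => intro t; rw [WS]; simp
    | m+1 =>
      intro t
      rw [WS]
      rw [Finset.card_biUnion ?outer]
      case outer =>
        intro a ha a' ha' haa
        simp only [Function.onFun]
        rw [Finset.disjoint_left]
        intro w hw hw'
        have := WS_head hw
        rw [WS_head hw'] at this
        exact haa (Option.some.inj this).symm
      have inner : ∀ a, a ∈ Finset.univ.erase t →
          ((n-1)^m * catalan (m+1) : ℕ) ≤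
          ((Finset.range (m+1)).attach.biUnion fun k =>
            ((WS n k.1 a) ×ˢ (WS n (m - k.1) t)).image fun p => a :: (p.1 ++ a :: p.2)).card := by
        intro a ha
        rw [Finset.card_biUnion ?inner]
        case inner =>
          intro k hk k' hk' hkk'
          simp only [Function.onFun]
          rw [Finset.disjoint_left]
          rintro w hw hw'
          simp only [Finset.mem_image, Finset.mem_product] at hw hw'
          obtain ⟨⟨w1, w2⟩, ⟨m1, m2⟩, rfl⟩ := hw
          obtain ⟨⟨w1', w2'⟩, ⟨m1', m2'⟩, he⟩ := hw'
          have he' : w1' ++ a :: w2' = w1 ++ a :: w2 := by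
            injection he
          rcases lt_or_gt_of_ne (fun h : k.1 = k'.1 => hkk' (Subtype.ext h)) with h | h
          · exact WS_split_ne h m1 m1' he'.symm
          · exact WS_split_ne h m1' m1 he'
        have piece : ∀ k : {x // x ∈ Finset.range (m+1)},
            (((WS n k.1 a) ×ˢ (WS n (m - k.1) t)).image
              fun p => a :: (p.1 ++ a :: p.2)).card
            = (WS n k.1 a).card * (WS n (m - k.1) t).card := by
          intro k
          rw [Finset.card_image_of_injOn, Finset.card_product]
          rintro ⟨w1, w2⟩ hw ⟨w1', w2'⟩ hw' he
          simp only [Finset.mem_coe, Finset.mem_product] at hw hw'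
          have he' : w1 ++ a :: w2 = w1' ++ a :: w2' := by injection he
          have hl : w1.length = w1'.length := by
            rw [WS_length _ _ _ hw.1, WS_length _ _ _ hw'.1]
          obtain ⟨e1, e2⟩ := List.append_inj he' hl
          injection e2 with _ e3
          rw [e1, e3]
        calc ((n-1)^m * catalan (m+1) : ℕ)
            = ∑ k ∈ Finset.range (m+1), (n-1)^m * (catalan k * catalan (m-k)) := by
              rw [← Finset.mul_sum, catalan_succ, Finset.sum_range]
          _ = ∑ k ∈ Finset.range (m+1),
              ((n-1)^k * catalan k) * ((n-1)^(m-k) * catalan (m-k)) := by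
              refine Finset.sum_congr rfl fun k hk => ?_
              rw [Finset.mem_range] at hk
              have : (n-1)^k * (n-1)^(m-k) = (n-1)^m := by
                rw [← pow_add]; congr 1; omega
              rw [← this]; ring
          _ ≤ ∑ k ∈ Finset.range (m+1), (WS n k a).card * (WS n (m-k) t).card := by
              refine Finset.sum_le_sum fun k hk => ?_
              rw [Finset.mem_range] at hk
              exact Nat.mul_le_mul
                (ih k (Nat.lt_succ_of_le (Nat.lt_succ_iff.mp hk)) a)
                (ih (m-k) (Nat.lt_succ_of_le (Nat.sub_le m k)) t)
          _ = ∑ k ∈ (Finset.range (m+1)).attach, (WS n k.1 a).card * (WS n (m-k.1) t).card := by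
              exact (Finset.sum_attach _ _).symm
          _ = _ := by
              refine Finset.sum_congr rfl fun k hk => (piece k).symm
      calc ((n-1)^(m+1) * catalan (m+1) : ℕ)
          = (Finset.univ.erase t).card * ((n-1)^m * catalan (m+1)) := by
            rw [Finset.card_erase_of_mem (Finset.mem_univ t), Finset.card_univ, Fintype.card_fin]
            ring
        _ ≤ ∑ a ∈ Finset.univ.erase t, ((n-1)^m * catalan (m+1)) := by
            rw [Finset.sum_const, smul_eq_mul]
        _ ≤ _ := Finset.sum_le_sum inner




section WProd
variable {M : Type*} [Monoid M] [StarMul M] {n : ℕ} (v : Fin n → M)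

def wProd : Bool → List (Fin n) → M
  | _, [] => 1
  | b, a :: w => (if b then v a else star (v a)) * wProd (!b) w

theorem wProd_append : ∀ (x y : List (Fin n)) (b : Bool),
    wProd v b (x ++ y) = wProd v b x * wProd v (xor b (decide (x.length % 2 = 1))) y := by
  intro x
  induction x with
  | nil => intro y b; simp [wProd]
  | cons a x' ih =>
    intro y b
    rcases Nat.even_or_odd x'.length with h | h
    · have h0 : x'.length % 2 = 0 := Nat.even_iff.mp h
      have h1 : (x'.length + 1) % 2 = 1 := by omega
      simp [List.cons_append, wProd, ih, h0, h1, mul_assoc]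
    · have h0 : x'.length % 2 = 1 := Nat.odd_iff.mp h
      have h1 : (x'.length + 1) % 2 = 0 := by omega
      simp [List.cons_append, wProd, ih, h0, h1, mul_assoc]

theorem prod_ofFn_pairs {m : ℕ} (t0 : Fin n) :
    ∀ w : List (Fin n), w.length = 2 * m →
    (List.ofFn fun s : Fin m =>
      v (w.getD (2 * (s : ℕ)) t0) * star (v (w.getD (2 * (s : ℕ) + 1) t0))).prod
      = wProd v true w := by
  induction m with
  | zero =>
    intro w hw
    rw [List.length_eq_zero_iff.mp hw]
    simp [wProd]
  | succ m ih =>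
    intro w hw
    rcases w with _ | ⟨x, w⟩
    · simp at hw
    rcases w with _ | ⟨y, w⟩
    · simp at hw; omega
    have hw' : w.length = 2 * m := by
      simp only [List.length_cons] at hw; omega
    rw [List.ofFn_succ, List.prod_cons]
    have head : (v (((x :: y :: w).getD (2 * ((0 : Fin (m+1)) : ℕ)) t0))
        * star (v ((x :: y :: w).getD (2 * ((0 : Fin (m+1)) : ℕ) + 1) t0)))
        = v x * star (v y) := by
      norm_num
    have tail : (List.ofFn fun s : Fin m =>
        v ((x :: y :: w).getD (2 * ((s.succ : Fin (m+1)) : ℕ)) t0)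
        * star (v ((x :: y :: w).getD (2 * ((s.succ : Fin (m+1)) : ℕ) + 1) t0))).prod
        = wProd v true w := by
      have efun : (fun s : Fin m =>
          v ((x :: y :: w).getD (2 * ((s.succ : Fin (m+1)) : ℕ)) t0)
          * star (v ((x :: y :: w).getD (2 * ((s.succ : Fin (m+1)) : ℕ) + 1) t0)))
          = fun s : Fin m =>
          v (w.getD (2 * (s : ℕ)) t0) * star (v (w.getD (2 * (s : ℕ) + 1) t0)) := by
        funext s
        have e1 : 2 * ((s : ℕ) + 1) = 2 * (s : ℕ) + 1 + 1 := by omega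
        have e2 : 2 * ((s : ℕ) + 1) + 1 = (2 * (s : ℕ) + 1) + 1 + 1 := by omega
        simp only [Fin.val_succ, e1, e2, List.getD_cons_succ]
      rw [efun, ih w hw']
    rw [head, tail]
    show _ = v x * (star (v y) * wProd v true w)
    rw [mul_assoc]
end WProd

section Expand
variable {R : Type*} [Semiring R] {ι : Type*} [Fintype ι] [DecidableEq ι]

theorem sum_pow_expand (c : ι → R) : ∀ m : ℕ,
    (∑ i, c i) ^ m = ∑ f : Fin m → ι, (List.ofFn fun s => c (f s)).prod := by
  intro m
  induction m with
  | zero => simp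
  | succ m ih =>
    rw [pow_succ', ih, Finset.sum_mul_sum]
    rw [← Equiv.sum_comp (Fin.consEquiv fun _ : Fin (m+1) => ι)
      (fun f : Fin (m+1) → ι => (List.ofFn fun s => c (f s)).prod), Fintype.sum_prod_type]
    refine Finset.sum_congr rfl fun i _ => Finset.sum_congr rfl fun g _ => ?_
    have : (List.ofFn fun s : Fin (m+1) => c ((Fin.consEquiv fun _ => ι) (i, g) s))
        = c i :: List.ofFn fun s : Fin m => c (g s) := by
      rw [List.ofFn_succ]
      congr 1
    rw [this, List.prod_cons]
end Expand

theorem WS_wProd_one {M : Type*} [Monoid M] [StarMul M] {n : ℕ} (v : Fin n → M)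
    (hv : ∀ i, star (v i) * v i = 1 ∧ v i * star (v i) = 1) :
    ∀ (m : ℕ) (t : Fin n) (w : List (Fin n)), w ∈ WS n m t → ∀ b, wProd v b w = 1 := by
  intro m
  induction m using Nat.strong_induction_on with
  | _ m ih =>
    match m with
    | 0 => intro t w hw b; rw [mem_WS_zero.mp hw]; rfl
    | m+1 =>
      intro t w hw b
      obtain ⟨a, hat, k, hk, w1, h1, w2, h2, rfl⟩ := mem_WS_succ.mp hw
      have hl1 : w1.length % 2 = 0 := by rw [WS_length k a w1 h1]; omega
      show (if b then v a else star (v a)) * wProd v (!b) (w1 ++ a :: w2) = 1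
      rw [wProd_append, ih k (Nat.lt_succ_of_le hk) a w1 h1 (!b), one_mul]
      have hx : xor (!b) (decide (w1.length % 2 = 1)) = !b := by
        simp [hl1]
      rw [hx]
      rcases Bool.eq_false_or_eq_true b with hb | hb <;> subst hb
      · show v a * (star (v a) * wProd v true w2) = 1
        rw [ih (m-k) (Nat.lt_succ_of_le (Nat.sub_le m k)) t w2 h2 true, mul_one]
        exact (hv a).2
      · show star (v a) * (v a * wProd v false w2) = 1
        rw [ih (m-k) (Nat.lt_succ_of_le (Nat.sub_le m k)) t w2 h2 false, mul_one]
        exact (hv a).1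

section Tau
variable {M : Type*} [NormedRing M] [StarRing M] [CStarRing M] [NormedAlgebra ℂ M]
    [StarModule ℂ M] [CompleteSpace M] (τ : M → ℂ) (hτ : IsTracialState τ)

include hτ

theorem tau_add (x y : M) : τ (x + y) = τ x + τ y := by
  have := hτ.1 1 x y; simpa using this

theorem tau_zero : τ 0 = 0 := by
  have := tau_add τ hτ 0 0; simpa using this

theorem tau_smul (c : ℂ) (x : M) : τ (c • x) = c * τ x := by
  have := hτ.1 c x 0; simpa [tau_zero τ hτ] using this

noncomputable def tauL (τ : M → ℂ) (hτ : IsTracialState τ) : M →ₗ[ℂ] ℂ where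
  toFun := τ
  map_add' := tau_add τ hτ
  map_smul' c x := by simpa using tau_smul τ hτ c x

/-- key positivity bound : `Re τ(y* y) ≤ ‖y‖²`. -/
theorem tau_star_mul_self_re_le (y : M) : (τ (star y * y)).re ≤ ‖y‖ ^ 2 := by
  letI : CStarAlgebra M :=
    { ‹NormedRing M›, ‹StarRing M›, ‹CStarRing M›, ‹NormedAlgebra ℂ M›,
      ‹StarModule ℂ M›, ‹CompleteSpace M› with }
  letI : PartialOrder M := CStarAlgebra.spectralOrder M
  letI : StarOrderedRing M := CStarAlgebra.spectralOrderedRing M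
  have h1 : star y * y ≤ algebraMap ℝ M (‖y‖ ^ 2) :=
    CStarAlgebra.star_mul_le_algebraMap_norm_sq
  rw [StarOrderedRing.le_iff] at h1
  obtain ⟨p, hp, hep⟩ := h1
  have hτp : 0 ≤ τ p := by
    refine AddSubmonoid.closure_induction ?_ ?_ ?_ hp
    · rintro x ⟨s, rfl⟩; exact hτ.2.2.1 s
    · simpa using (tau_zero τ hτ).ge
    · intro a b _ _ ha hb
      rw [tau_add τ hτ]
      exact add_nonneg ha hb
  have halg : τ (algebraMap ℝ M (‖y‖ ^ 2)) = ((‖y‖ ^ 2 : ℝ) : ℂ) := by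
    have : algebraMap ℝ M (‖y‖ ^ 2) = ((‖y‖ ^ 2 : ℝ) : ℂ) • (1 : M) := by
      rw [IsScalarTower.algebraMap_apply ℝ ℂ M, Algebra.algebraMap_eq_smul_one,
        Complex.coe_algebraMap]
    rw [this, tau_smul τ hτ, hτ.2.1, mul_one]
  have := congrArg τ hep
  rw [halg, tau_add τ hτ] at this
  have hre := congrArg Complex.re this
  simp only [Complex.add_re, Complex.ofReal_re] at hre
  have : 0 ≤ (τ p).re := by
    rw [Complex.le_def] at hτp; exact hτp.1
  linarith

end Tau

/-- If all traces of words `v_{i₁} v_{j₁}* ⋯ v_{i_m} v_{j_m}*`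
in the unitaries `v₁, …, vₙ` have non-negative real part, then
`‖v₁ + ⋯ + vₙ‖ ≥ 2√(n-1)`. -/
theorem norm_sum_ge_of_nonneg_word_traces
    {M : Type*} [NormedRing M] [StarRing M] [CStarRing M] [NormedAlgebra ℂ M]
    [StarModule ℂ M] [CompleteSpace M]
    (τ : M → ℂ) (hτ : IsTracialState τ)
    (n : ℕ) (hn : 1 ≤ n)
    (v : Fin n → M) (hv : ∀ i, IsUnitary (v i))
    (hpos : ∀ (m : ℕ), 1 ≤ m → ∀ i j : Fin m → Fin n,
      0 ≤ (τ ((List.ofFn fun s : Fin m => v (i s) * star (v (j s))).prod)).re) :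
    2 * Real.sqrt ((n : ℝ) - 1) ≤ ‖∑ i, v i‖ := by
  rcases eq_or_lt_of_le hn with h1 | hn2
  · -- n = 1 : the bound is trivial
    subst h1
    simp only [Nat.cast_one, sub_self, Real.sqrt_zero, mul_zero]
    exact norm_nonneg _
  have hn2 : 2 ≤ n := hn2
  classical
  set S : M := ∑ i, v i with hS
  have t0 : Fin n := ⟨0, by omega⟩
  set a : M := S * star S with ha
  have hsa : star a = a := by rw [ha, star_mul, star_star]
  have ha' : a = ∑ p : Fin n × Fin n, v p.1 * star (v p.2) := by
    rw [ha, hS, star_sum, Finset.sum_mul_sum, ← Finset.univ_product_univ,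
      Finset.sum_product]
  -- the key finite inequality
  have key : ∀ m : ℕ, 1 ≤ m →
      (((n-1)^(2*m) * catalan (2*m) : ℕ) : ℝ) ≤ ‖S‖^(4*m) := by
    intro m hm
    have expand : a ^ (2*m) = ∑ f : Fin (2*m) → Fin n × Fin n,
        (List.ofFn fun s => v (f s).1 * star (v (f s).2)).prod := by
      rw [ha', sum_pow_expand]
    -- the good set of words
    set Ψ : List (Fin n) → (Fin (2*m) → Fin n × Fin n) := fun w =>
      fun s => (w.getD (2 * (s : ℕ)) t0, w.getD (2 * (s : ℕ) + 1) t0) with hΨ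
    set G : Finset (Fin (2*m) → Fin n × Fin n) := (WS n (2*m) t0).image Ψ with hG
    have hG1 : ∀ f ∈ G, (τ ((List.ofFn fun s =>
        v (f s).1 * star (v (f s).2)).prod)).re = 1 := by
      intro f hf
      obtain ⟨w, hw, rfl⟩ := Finset.mem_image.mp hf
      have hlen := WS_length _ _ _ hw
      have hprod : (List.ofFn fun s : Fin (2*m) =>
          v ((Ψ w) s).1 * star (v ((Ψ w) s).2)).prod = wProd v true w :=
        prod_ofFn_pairs v t0 w hlen
      rw [hprod, WS_wProd_one v (fun i => hv i) (2*m) t0 w hw true, hτ.2.1]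
      exact Complex.one_re
    have cardG : G.card = (WS n (2*m) t0).card := by
      rw [hG]
      apply Finset.card_image_of_injOn
      intro w hw w' hw' he
      have hlw := WS_length _ _ _ (Finset.mem_coe.mp hw)
      have hlw' := WS_length _ _ _ (Finset.mem_coe.mp hw')
      apply List.ext_getElem (by rw [hlw, hlw'])
      intro i hi1 hi2
      have hs : i / 2 < 2 * m := by
        rw [hlw] at hi1; omega
      have hfe := congrFun he ⟨i / 2, hs⟩
      have hgoal : w.getD i t0 = w'.getD i t0 := by
        rcases Nat.even_or_odd i with h | h
        · have hei : 2 * (i / 2) = i := by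
            have := Nat.even_iff.mp h; omega
          have hh := congrArg Prod.fst hfe
          simp only [hΨ] at hh
          rwa [hei] at hh
        · have hei : 2 * (i / 2) + 1 = i := by
            have := Nat.odd_iff.mp h; omega
          have hh := congrArg Prod.snd hfe
          simp only [hΨ] at hh
          rwa [hei] at hh
      rwa [List.getD_eq_getElem w t0 hi1, List.getD_eq_getElem w' t0 hi2] at hgoal
    have lower : (((WS n (2*m) t0).card : ℕ) : ℝ) ≤ (τ (a ^ (2*m))).re := by
      have hτsum : τ (a ^ (2*m)) = ∑ f : Fin (2*m) → Fin n × Fin n,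
          τ ((List.ofFn fun s => v (f s).1 * star (v (f s).2)).prod) := by
        rw [expand]
        exact map_sum (tauL τ hτ) _ _
      rw [hτsum, Complex.re_sum]
      calc (((WS n (2*m) t0).card : ℕ) : ℝ)
          = ∑ f ∈ G, (τ ((List.ofFn fun s =>
              v (f s).1 * star (v (f s).2)).prod)).re := by
            rw [Finset.sum_congr rfl hG1, Finset.sum_const, cardG]
            simp
        _ ≤ _ := by
            apply Finset.sum_le_sum_of_subset_of_nonneg (Finset.subset_univ G)
            intro f _ _
            simpa using hpos (2*m) (by omega) (fun s => (f s).1) (fun s => (f s).2)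
    have upper : (τ (a ^ (2*m))).re ≤ ‖S‖^(4*m) := by
      have he : a ^ (2*m) = star (a ^ m) * (a ^ m) := by
        rw [star_pow, hsa, ← pow_add]
        congr 1
        omega
      have h1 : (τ (a ^ (2*m))).re ≤ ‖a ^ m‖ ^ 2 := by
        rw [he]; exact tau_star_mul_self_re_le τ hτ _
      have h2 : ‖a ^ m‖ ≤ (‖S‖^2) ^ m := by
        calc ‖a ^ m‖ ≤ ‖a‖ ^ m := norm_pow_le' a (by omega)
          _ ≤ (‖S‖^2) ^ m := by
            apply pow_le_pow_left₀ (norm_nonneg a)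
            calc ‖a‖ ≤ ‖S‖ * ‖star S‖ := norm_mul_le _ _
              _ = ‖S‖^2 := by rw [norm_star]; ring
      calc (τ (a ^ (2*m))).re ≤ ‖a ^ m‖ ^ 2 := h1
        _ ≤ ((‖S‖^2) ^ m) ^ 2 := by
            apply pow_le_pow_left₀ (norm_nonneg _) h2
        _ = ‖S‖^(4*m) := by rw [← pow_mul, ← pow_mul]; congr 1; ring
    calc (((n-1)^(2*m) * catalan (2*m) : ℕ) : ℝ)
        ≤ (((WS n (2*m) t0).card : ℕ) : ℝ) := by
          exact_mod_cast Nat.cast_le.mpr (WS_card (2*m) t0)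
      _ ≤ (τ (a ^ (2*m))).re := lower
      _ ≤ ‖S‖^(4*m) := upper
  -- numerical endgame
  set B : ℝ := ‖S‖^2 with hB
  set ρ : ℝ := 4 * ((n:ℝ) - 1) with hρdef
  have hn1R : (1:ℝ) ≤ (n:ℝ) := by exact_mod_cast hn
  have hρpos : 0 < ρ := by
    rw [hρdef]
    have : (2:ℝ) ≤ (n:ℝ) := by exact_mod_cast hn2
    nlinarith
  have hBnn : 0 ≤ B := by rw [hB]; positivity
  have hcast : ((n-1 : ℕ) : ℝ) = (n:ℝ) - 1 := by
    have := Nat.cast_sub (le_trans (by norm_num) hn2) (R := ℝ) (m := 1) (n := n)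
    simpa using this
  have hkey2 : ∀ m : ℕ, 1 ≤ m → ρ^(2*m) ≤ 16 * (m:ℝ)^2 * B^(2*m) := by
    intro m hm
    have hcat : (4:ℝ)^(2*m) ≤ (2*(2*m)) * (2*m+1) * (catalan (2*m) : ℝ) := by
      have hr : 0 < 2*m := by omega
      have := Nat.four_pow_le_two_mul_self_mul_centralBinom (2*m) hr
      rw [← succ_mul_catalan_eq_centralBinom] at this
      have := (Nat.cast_le (α := ℝ)).mpr this
      push_cast at this ⊢
      nlinarith [this]
    have hkm := key m hm
    rw [Nat.cast_mul, Nat.cast_pow, hcast] at hkm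
    have hpow : B^(2*m) = ‖S‖^(4*m) := by
      rw [hB, ← pow_mul]; congr 1; ring
    have step1 : ρ^(2*m) ≤ (2*(2*m)) * (2*m+1) * (((n:ℝ)-1)^(2*m) * (catalan (2*m) : ℝ)) := by
      rw [hρdef, mul_pow]
      have hnn : (0:ℝ) ≤ ((n:ℝ)-1)^(2*m) := pow_nonneg (by linarith) _
      calc (4:ℝ)^(2*m) * ((n:ℝ)-1)^(2*m)
          ≤ ((2*(2*m)) * (2*m+1) * (catalan (2*m) : ℝ)) * ((n:ℝ)-1)^(2*m) :=
            mul_le_mul_of_nonneg_right hcat hnn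
        _ = (2*(2*m)) * (2*m+1) * (((n:ℝ)-1)^(2*m) * (catalan (2*m) : ℝ)) := by ring
    have step2 : ρ^(2*m) ≤ (2*(2*m)) * (2*m+1) * B^(2*m) := by
      refine step1.trans ?_
      rw [hpow]
      have hc : (0:ℝ) ≤ (2*(2*m)) * (2*m+1) := by positivity
      exact mul_le_mul_of_nonneg_left hkm hc
    refine step2.trans ?_
    have hb : (0:ℝ) ≤ B^(2*m) := by positivity
    have hmR : (1:ℝ) ≤ (m:ℝ) := by exact_mod_cast hm
    have : ((2:ℝ)*(2*m)) * (2*m+1) ≤ 16 * (m:ℝ)^2 := by push_cast; nlinarith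
    exact mul_le_mul_of_nonneg_right this hb
  have hBρ : ρ ≤ B := by
    by_contra hcon
    push_neg at hcon
    set q : ℝ := B / ρ with hq
    have hq0 : 0 ≤ q := div_nonneg hBnn hρpos.le
    have hq1 : q < 1 := (div_lt_one hρpos).mpr hcon
    have hBq : B = q * ρ := by
      rw [hq, div_mul_cancel₀]
      exact hρpos.ne'
    have hone : ∀ m : ℕ, 1 ≤ m → (1:ℝ) ≤ 16 * (m:ℝ)^2 * (q^2)^m := by
      intro m hm
      have h : ρ^(2*m) ≤ 16 * (m:ℝ)^2 * (q^(2*m) * ρ^(2*m)) := by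
        calc ρ^(2*m) ≤ 16 * (m:ℝ)^2 * B^(2*m) := hkey2 m hm
          _ = 16 * (m:ℝ)^2 * (q^(2*m) * ρ^(2*m)) := by rw [hBq, mul_pow]
      have hρp : (0:ℝ) < ρ^(2*m) := pow_pos hρpos _
      have h2 : 1 * ρ^(2*m) ≤ (16 * (m:ℝ)^2 * q^(2*m)) * ρ^(2*m) := by
        rw [one_mul]
        calc ρ^(2*m) ≤ 16 * (m:ℝ)^2 * (q^(2*m) * ρ^(2*m)) := h
          _ = (16 * (m:ℝ)^2 * q^(2*m)) * ρ^(2*m) := by ring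
      have := le_of_mul_le_mul_right h2 hρp
      rwa [show (q^2)^m = q^(2*m) by rw [← pow_mul]]
    have hq2lt : q^2 < 1 := by nlinarith
    have hq2nn : 0 ≤ q^2 := sq_nonneg q
    have ht : Filter.Tendsto (fun m : ℕ => 16 * ((m:ℝ)^2 * (q^2)^m))
        Filter.atTop (nhds 0) := by
      have := (tendsto_pow_const_mul_const_pow_of_lt_one 2 hq2nn hq2lt).const_mul (16:ℝ)
      simpa using this
    have hev := (ht.eventually_lt_const (by norm_num : (0:ℝ) < 1)).and
      (Filter.eventually_ge_atTop 1)
    obtain ⟨m, hmlt, hm1⟩ := hev.exists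
    have := hone m hm1
    rw [mul_assoc] at this
    linarith
  -- conclude
  have hsq : (2 * Real.sqrt ((n:ℝ) - 1))^2 = ρ := by
    rw [mul_pow, Real.sq_sqrt (by linarith), hρdef]
    norm_num
  have hfin : (2 * Real.sqrt ((n:ℝ) - 1))^2 ≤ ‖S‖^2 := by
    rw [hsq, ← hB]
    exact hBρ
  have h2s : 0 ≤ 2 * Real.sqrt ((n:ℝ) - 1) := by positivity
  exact (pow_le_pow_iff_left₀ h2s (norm_nonneg S) (by norm_num)).mp hfin
end
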